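/- arXiv:1709.00474 — 3 statements merged into one kernel-verified Lean document; each statement's English description precedes it below -/
import Mathlib

section
/- Let G be a finite simple graph that is not complete, let G be chordal, let n be its order, d the largest cardinality of a clique in G, and κ its vertex connectivity. Then for every i = 1, …, κ+1 one has b_i = Σ_{Y ⊆ V(G), |Y| = i−1} (W(G−Y) − 1) + 1, where the sum ranges over all subsets Y of V(G) of cardinality i−1. -/
open Finset

/-- `G` is chordal: every cycle of length at least 4 has a chord, i.e. an edge
joining two non-consecutive vertices of the cycle. -/
def IsChordal {V : Type*} (G : SimpleGraph V) : Prop :=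
  ∀ (n : ℕ), 4 ≤ n → ∀ f : ZMod n → V, Function.Injective f →
    (∀ i : ZMod n, G.Adj (f i) (f (i + 1))) →
    ∃ i j : ZMod n, i ≠ j ∧ i + 1 ≠ j ∧ j + 1 ≠ i ∧ G.Adj (f i) (f j)

/-- The number of cliques of `G` with exactly `i` vertices. -/
noncomputable def cliqueCount {V : Type*} [Fintype V] (G : SimpleGraph V) (i : ℕ) : ℕ :=
  {s : Finset V | G.IsNClique i s}.ncard

/-- `W(G - Y)`: the number of connected components of the subgraph of `G` induced on the
complement of `Y`. -/
noncomputable def numComponents {V : Type*} [Fintype V] [DecidableEq V] (G : SimpleGraph V)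
    (Y : Finset V) : ℕ :=
  Nat.card (G.induce (↑(Yᶜ) : Set V)).ConnectedComponent

/-- A vertex-cut of `G`: a set of vertices whose removal disconnects `G`. -/
def IsVertexCut {V : Type*} [Fintype V] [DecidableEq V] (G : SimpleGraph V) (Y : Finset V) :
    Prop :=
  ¬ (G.induce (↑(Yᶜ) : Set V)).Connected

/-- The vertex connectivity `κ(G)`: the minimum cardinality of a vertex-cut. -/
noncomputable def vertexConnectivity {V : Type*} [Fintype V] [DecidableEq V]
    (G : SimpleGraph V) : ℕ :=
  sInf {k | ∃ Y : Finset V, IsVertexCut G Y ∧ Y.card = k}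

/-- `s` is a maximal clique of `G`. -/
def IsMaxCliqueOf {V : Type*} (G : SimpleGraph V) (s : Finset V) : Prop :=
  G.IsClique (↑s : Set V) ∧ ∀ t : Finset V, G.IsClique (↑t : Set V) → s ⊆ t → s = t

/-- A dominating `i`-clique of `G`: a set of `i`-cliques such that every maximal clique of
order at least `i` contains some member of the set. -/
def IsDominatingCliqueSet {V : Type*} (G : SimpleGraph V) (i : ℕ)
    (D : Finset (Finset V)) : Prop :=
  (∀ s ∈ D, G.IsNClique i s) ∧
    ∀ t : Finset V, IsMaxCliqueOf G t → i ≤ t.card → ∃ s ∈ D, s ⊆ t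

/-- `d_i(G)`: the minimum cardinality of a dominating `i`-clique of `G`. -/
noncomputable def domNum {V : Type*} (G : SimpleGraph V) (i : ℕ) : ℕ :=
  sInf {k | ∃ D : Finset (Finset V), IsDominatingCliqueSet G i D ∧ D.card = k}

/-- `κ̃(G)`: the maximum cardinality of the intersection of a pair of distinct maximal
cliques of `G`. -/
noncomputable def kappaTilde {V : Type*} [DecidableEq V] (G : SimpleGraph V) : ℕ :=
  sSup {k | ∃ C C' : Finset V, IsMaxCliqueOf G C ∧ IsMaxCliqueOf G C' ∧ C ≠ C' ∧
    (C ∩ C').card = k}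

/-- `G` restricted to the vertex set `s` is a threshold graph: it can be built from a
one-vertex graph by repeatedly adding either an isolated vertex or a vertex adjacent to
all existing vertices. -/
inductive IsThresholdOn {V : Type*} [DecidableEq V] (G : SimpleGraph V) : Finset V → Prop
  | single (v : V) : IsThresholdOn G {v}
  | isolated (s : Finset V) (v : V) (hv : v ∉ s) (hs : IsThresholdOn G s)
      (hiso : ∀ u ∈ s, ¬ G.Adj v u) : IsThresholdOn G (insert v s)
  | dominating (s : Finset V) (v : V) (hv : v ∉ s) (hs : IsThresholdOn G s)
      (hdom : ∀ u ∈ s, G.Adj v u) : IsThresholdOn G (insert v s)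

/-- `G` is a threshold graph. -/
def IsThreshold {V : Type*} [Fintype V] [DecidableEq V] (G : SimpleGraph V) : Prop :=
  IsThresholdOn G Finset.univ

/-- `|C_i(G)|`: the number of maximal cliques of `G` with exactly `i` vertices. -/
noncomputable def maxCliqueCount {V : Type*} [Fintype V] (G : SimpleGraph V) (i : ℕ) : ℕ :=
  {s : Finset V | IsMaxCliqueOf G s ∧ s.card = i}.ncard

/-- `s` is a maximal clique of `G` among the cliques contained in `W`, i.e. a facet of the
restriction of the clique complex of `G` to `W`. -/
def IsMaxCliqueWithin {V : Type*} (G : SimpleGraph V) (W : Finset V) (s : Finset V) : Prop :=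
  s ⊆ W ∧ G.IsClique (↑s : Set V) ∧
    ∀ t : Finset V, t ⊆ W → G.IsClique (↑t : Set V) → s ⊆ t → s = t

/-- The restriction of the clique complex of `G` to `W` is pure: all its facets have the
same cardinality. -/
def PureOn {V : Type*} (G : SimpleGraph V) (W : Finset V) : Prop :=
  ∀ s t : Finset V, IsMaxCliqueWithin G W s → IsMaxCliqueWithin G W t → s.card = t.card


namespace ChordalAux
variable {V : Type} {G : SimpleGraph V}
set_option linter.unusedVariables false
set_option linter.unusedSectionVars false
set_option maxHeartbeats 1200000

/-- Spanning subgraph of `G` keeping only edges inside `T`. -/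
def KG (G : SimpleGraph V) (T : Finset V) : SimpleGraph V where
  Adj x y := G.Adj x y ∧ x ∈ T ∧ y ∈ T
  symm := ⟨fun x y ⟨h, hx, hy⟩ => ⟨h.symm, hy, hx⟩⟩
  loopless := ⟨fun x ⟨h, _, _⟩ => G.loopless.irrefl x h⟩

lemma KG_adj {T : Finset V} {x y : V} :
    (KG G T).Adj x y ↔ G.Adj x y ∧ x ∈ T ∧ y ∈ T := Iff.rfl

lemma mem_of_walk_support {T : Finset V} {x y : V} (p : (KG G T).Walk x y)
    (hx : x ∈ T) : ∀ z ∈ p.support, z ∈ T := by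
  induction p with
  | nil => intro z hz; simp at hz; subst hz; exact hx
  | cons h q ih =>
    intro z hz
    rcases List.mem_cons.1 (by simpa using hz) with rfl | hz'
    · exact hx
    · exact ih h.2.2 z hz'

lemma reach_transfer {T T' : Finset V} {x y : V} (p : (KG G T).Walk x y)
    (hsub : ∀ z ∈ p.support, z ∈ T') : (KG G T').Reachable x y := by
  induction p with
  | nil => exact SimpleGraph.Reachable.refl _
  | cons h q ih =>
    refine SimpleGraph.Reachable.trans (SimpleGraph.Adj.reachable ?_) (ih ?_)
    · exact ⟨h.1, hsub _ (by simp), hsub _ (by simp)⟩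
    · intro z hz; exact hsub z (by simp [hz])

lemma last_edge {T : Finset V} {u v : V} (h : (KG G T).Reachable u v) (hne : u ≠ v) :
    ∃ z, G.Adj v z ∧ z ∈ T ∧ (KG G T).Reachable u z := by
  obtain ⟨p⟩ := h
  cases hp : p.reverse with
  | nil => exact absurd rfl hne
  | cons hadj q =>
    exact ⟨_, hadj.1, hadj.2.2, ⟨q.reverse⟩⟩

lemma induce_to_KG {S : Finset V} {a b : ↥(↑S : Set V)}
    (h : (G.induce (↑S : Set V)).Reachable a b) : (KG G S).Reachable a.1 b.1 := by
  obtain ⟨p⟩ := h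
  induction p with
  | nil => exact SimpleGraph.Reachable.refl _
  | @cons x y _ h q ih =>
    exact SimpleGraph.Reachable.trans
      (SimpleGraph.Adj.reachable ⟨h, x.2, y.2⟩) ih

lemma KG_to_induce {S : Finset V} {a b : V} (p : (KG G S).Walk a b)
    (ha : a ∈ S) (hb : b ∈ S) :
    (G.induce (↑S : Set V)).Reachable ⟨a, ha⟩ ⟨b, hb⟩ := by
  induction p with
  | nil => exact SimpleGraph.Reachable.refl _
  | @cons x y _ h q ih =>
    exact SimpleGraph.Reachable.trans
      (SimpleGraph.Adj.reachable (by exact h.1 : (G.induce (↑S : Set V)).Adj ⟨x, h.2.1⟩ ⟨y, h.2.2⟩))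
      (ih h.2.2 hb)

lemma remove_top [DecidableEq V] {r : V → ℕ}
    (hcl : ∀ v, G.IsClique {u | G.Adj v u ∧ r u < r v})
    {T : Finset V} {M : V} (hM : ∀ u ∈ T, u ≠ M → r u < r M) :
    ∀ (n : ℕ) {x y : V}, x ≠ M → y ≠ M → ∀ p : (KG G T).Walk x y, p.length ≤ n →
      p.support.Nodup → (KG G (T.erase M)).Reachable x y := by
  intro n
  induction n with
  | zero =>
    intro x y hx hy p hl hnd
    cases p with
    | nil => exact SimpleGraph.Reachable.refl _
    | cons h q => simp at hl
  | succ n ih =>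
    intro x y hx hy p hl hnd
    cases p with
    | nil => exact SimpleGraph.Reachable.refl _
    | @cons _ w _ h q =>
      rw [SimpleGraph.Walk.support_cons] at hnd
      have hnd1 := (List.nodup_cons.1 hnd).1
      have hndq0 : q.support.Nodup := (List.nodup_cons.1 hnd).2
      by_cases hw : w = M
      · cases q with
        | nil => exact absurd hw hy
        | @cons _ w₂ _ h₂ q₂ =>
          rw [SimpleGraph.Walk.support_cons] at hndq0
          have hndq : q₂.support.Nodup := (List.nodup_cons.1 hndq0).2
          have hw₂M : w₂ ≠ M := by
            intro he
            exact (List.nodup_cons.1 hndq0).1 (hw ▸ he ▸ q₂.start_mem_support)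
          have hlq : q₂.length ≤ n := by
            simp only [SimpleGraph.Walk.length_cons] at hl; omega
          have hreach₂ : (KG G (T.erase M)).Reachable w₂ y :=
            ih hw₂M hy q₂ hlq hndq
          rcases ne_or_eq x w₂ with hne | he
          · have hadj : G.Adj x w₂ := by
              subst hw
              refine hcl w ?_ ?_ hne
              · exact ⟨h.1.symm, hM x h.2.1 hx⟩
              · exact ⟨h₂.1, hM w₂ h₂.2.2 hw₂M⟩
            have hadj' : (KG G (T.erase M)).Adj x w₂ :=
              ⟨hadj, Finset.mem_erase.2 ⟨hx, h.2.1⟩, Finset.mem_erase.2 ⟨hw₂M, h₂.2.2⟩⟩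
            exact hadj'.reachable.trans hreach₂
          · exact he ▸ hreach₂
      · have hadj' : (KG G (T.erase M)).Adj x w :=
          ⟨h.1, Finset.mem_erase.2 ⟨hx, h.2.1⟩, Finset.mem_erase.2 ⟨hw, h.2.2⟩⟩
        refine hadj'.reachable.trans ?_
        exact ih hw hy q (by simp only [SimpleGraph.Walk.length_cons] at hl; omega) hndq0

lemma exists_earlier_nbr [DecidableEq V] {r : V → ℕ} (hr : Function.Injective r)
    (hcl : ∀ v, G.IsClique {u | G.Adj v u ∧ r u < r v}) :
    ∀ (n : ℕ) (S : Finset V), S.card ≤ n → ∀ {u v : V}, u ∈ S → v ∈ S →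
      (KG G S).Reachable u v → r u < r v → ∃ z ∈ S, G.Adj v z ∧ r z < r v := by
  intro n
  induction n with
  | zero =>
    intro S hS u v hu hv _ _
    exact absurd (Finset.card_pos.2 ⟨u, hu⟩) (by omega)
  | succ n ih =>
    intro S hS u v hu hv hreach hruv
    have huv : u ≠ v := fun he => by subst he; omega
    obtain ⟨M, hM, hMmax⟩ := Finset.exists_max_image S r ⟨u, hu⟩
    by_cases hvM : v = M
    · obtain ⟨z, hz1, hz2, _⟩ := last_edge hreach huv
      refine ⟨z, hz2, hz1, ?_⟩
      have hzv : z ≠ v := fun he => (he ▸ hz1).ne' rfl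
      have := hMmax z hz2
      rcases lt_or_eq_of_le (hvM ▸ this) with h | h
      · exact h
      · exact absurd (hr h) hzv
    · by_cases huM : u = M
      · have hle : r v ≤ r M := hMmax v hv
        rw [← huM] at hle
        omega
      · obtain ⟨p0⟩ := hreach
        have hp := p0.toPath.2
        have hreach' : (KG G (S.erase M)).Reachable u v :=
          remove_top hcl (fun w hw hwM => lt_of_le_of_ne (hMmax w hw) (fun he => hwM (hr he)))
            (p0.toPath : (KG G S).Walk u v).length huM hvM _ le_rfl hp.support_nodup
        obtain ⟨z, hz1, hz2, hz3⟩ := ih (S.erase M)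
          (by have := Finset.card_erase_of_mem hM; omega)
          (Finset.mem_erase.2 ⟨huM, hu⟩) (Finset.mem_erase.2 ⟨hvM, hv⟩) hreach' hruv
        exact ⟨z, Finset.mem_of_mem_erase hz1, hz2, hz3⟩

section Counting
variable [Fintype V] [DecidableEq V]

open scoped Classical in
/-- earlier neighbours of `v` -/
noncomputable def EN (G : SimpleGraph V) (r : V → ℕ) (v : V) : Finset V :=
  univ.filter (fun u => G.Adj v u ∧ r u < r v)

open scoped Classical in
/-- representatives finset -/
noncomputable def FF (G : SimpleGraph V) (r : V → ℕ) (Y : Finset V) : Finset V :=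
  univ.filter (fun v => v ∉ Y ∧ EN G r v ⊆ Y)

variable {r : V → ℕ}

lemma comp_count (hr : Function.Injective r)
    (hcl : ∀ v, G.IsClique {u | G.Adj v u ∧ r u < r v}) (Y : Finset V) :
    numComponents G Y = (FF G r Y).card := by
  classical
  have hmem : ∀ v ∈ FF G r Y, (v : V) ∈ (↑(Yᶜ) : Set V) := by
    intro v hv
    rw [Finset.mem_coe, Finset.mem_compl]
    exact ((Finset.mem_filter.1 hv).2).1
  set Φ : {v // v ∈ FF G r Y} → (G.induce (↑(Yᶜ) : Set V)).ConnectedComponent :=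
    fun v => (G.induce (↑(Yᶜ) : Set V)).connectedComponentMk ⟨v.1, hmem v.1 v.2⟩ with hΦ
  have hbij : Function.Bijective Φ := by
    constructor
    · rintro ⟨v, hv⟩ ⟨v', hv'⟩ heq
      rw [hΦ] at heq
      have hre : (G.induce (↑(Yᶜ) : Set V)).Reachable ⟨v, hmem v hv⟩ ⟨v', hmem v' hv'⟩ :=
        (SimpleGraph.ConnectedComponent.eq).1 heq
      have hK : (KG G Yᶜ).Reachable v v' := induce_to_KG hre
      rcases lt_trichotomy (r v) (r v') with h | h | h
      · obtain ⟨z, hz1, hz2, hz3⟩ := exists_earlier_nbr hr hcl (Yᶜ.card) Yᶜ le_rfl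
          (Finset.mem_compl.2 ((Finset.mem_filter.1 hv).2).1)
          (Finset.mem_compl.2 ((Finset.mem_filter.1 hv').2).1) hK h
        exact absurd (((Finset.mem_filter.1 hv').2).2 (Finset.mem_filter.2
          ⟨Finset.mem_univ z, hz2, hz3⟩)) (Finset.mem_compl.1 hz1)
      · exact Subtype.ext (hr h)
      · obtain ⟨z, hz1, hz2, hz3⟩ := exists_earlier_nbr hr hcl (Yᶜ.card) Yᶜ le_rfl
          (Finset.mem_compl.2 ((Finset.mem_filter.1 hv').2).1)
          (Finset.mem_compl.2 ((Finset.mem_filter.1 hv).2).1) hK.symm h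
        exact absurd (((Finset.mem_filter.1 hv).2).2 (Finset.mem_filter.2
          ⟨Finset.mem_univ z, hz2, hz3⟩)) (Finset.mem_compl.1 hz1)
    · intro c
      obtain ⟨⟨x, hx⟩, rfl⟩ := c.exists_rep
      have hxY : x ∈ Yᶜ := Finset.mem_coe.1 hx
      set D : Finset V := Yᶜ.filter (fun u => (KG G Yᶜ).Reachable u x) with hD
      have hxD : x ∈ D := Finset.mem_filter.2 ⟨hxY, SimpleGraph.Reachable.refl x⟩
      obtain ⟨v, hvD, hvmin⟩ := Finset.exists_min_image D r ⟨x, hxD⟩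
      have hvY : v ∈ Yᶜ := (Finset.mem_filter.1 hvD).1
      have hvre : (KG G Yᶜ).Reachable v x := (Finset.mem_filter.1 hvD).2
      have hvF : v ∈ FF G r Y := by
        refine Finset.mem_filter.2 ⟨Finset.mem_univ v, Finset.mem_compl.1 hvY, ?_⟩
        intro u hu
        obtain ⟨-, hadj, hru⟩ := Finset.mem_filter.1 hu
        by_contra huY
        have huc : u ∈ Yᶜ := Finset.mem_compl.2 huY
        have : u ∈ D := Finset.mem_filter.2 ⟨huc,
          (SimpleGraph.Adj.reachable (⟨hadj.symm, huc, hvY⟩ : (KG G Yᶜ).Adj u v)).trans hvre⟩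
        exact absurd (hvmin u this) (by omega)
      refine ⟨⟨v, hvF⟩, ?_⟩
      obtain ⟨p⟩ := hvre
      rw [hΦ]
      exact SimpleGraph.ConnectedComponent.sound (KG_to_induce p hvY hxY)
  have h1 : Nat.card {v // v ∈ FF G r Y} = numComponents G Y :=
    Nat.card_eq_of_bijective Φ hbij
  rw [← h1]
  simp [Nat.card_eq_fintype_card]

end Counting
section Cnt2
variable [Fintype V] [DecidableEq V] {r : V → ℕ}

noncomputable def mdeg (G : SimpleGraph V) (r : V → ℕ) (v : V) : ℕ := (EN G r v).card

variable {r : V → ℕ}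

lemma mem_EN {u v : V} : u ∈ EN G r v ↔ G.Adj v u ∧ r u < r v := by
  simp [EN, Finset.mem_filter]

lemma EN_insert_clique (hcl : ∀ v, G.IsClique {u | G.Adj v u ∧ r u < r v}) (v : V)
    {t : Finset V} (ht : t ⊆ EN G r v) : G.IsClique (↑(insert v t) : Set V) := by
  rw [Finset.coe_insert]
  refine SimpleGraph.IsClique.insert ?_ ?_
  · refine ((hcl v).subset ?_)
    intro u hu
    exact mem_EN.1 (ht hu)
  · intro b hb _
    exact (mem_EN.1 (ht hb)).1

lemma v_not_mem_EN (v : V) : v ∉ EN G r v := by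
  intro h
  exact (G.loopless.irrefl v) (mem_EN.1 h).1

lemma EN_isNClique (hcl : ∀ v, G.IsClique {u | G.Adj v u ∧ r u < r v}) (v : V) :
    G.IsNClique (mdeg G r v + 1) (insert v (EN G r v)) := by
  constructor
  · exact EN_insert_clique hcl v (le_refl _)
  · rw [Finset.card_insert_of_notMem (v_not_mem_EN v), mdeg]

/-- the vertex of max rank in a finset -/
noncomputable def maxVert (r : V → ℕ) (s : Finset V) (hs : s.Nonempty) : V :=
  (Finset.exists_max_image s r hs).choose

lemma maxVert_mem {s : Finset V} (hs : s.Nonempty) : maxVert r s hs ∈ s :=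
  (Finset.exists_max_image s r hs).choose_spec.1

lemma maxVert_max {s : Finset V} (hs : s.Nonempty) :
    ∀ u ∈ s, r u ≤ r (maxVert r s hs) :=
  (Finset.exists_max_image s r hs).choose_spec.2

lemma maxVert_eq (hr : Function.Injective r) {s : Finset V} (hs : s.Nonempty) {v : V}
    (hv : v ∈ s) (hmax : ∀ u ∈ s, u ≠ v → r u < r v) : maxVert r s hs = v := by
  by_contra hne
  exact absurd (maxVert_max hs v hv) (not_le.2 (hmax _ (maxVert_mem hs) hne))

lemma cliqueCount_eq (hr : Function.Injective r)
    (hcl : ∀ v, G.IsClique {u | G.Adj v u ∧ r u < r v}) {j : ℕ} (hj : 1 ≤ j) :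
    cliqueCount G j = ∑ v : V, (mdeg G r v).choose (j - 1) := by
  classical
  have h0 : {s : Finset V | G.IsNClique j s} =
      ↑(univ.filter (fun s : Finset V => G.IsNClique j s)) := by
    ext s; simp
  rw [cliqueCount, h0, Set.ncard_coe_finset]
  have hne : ∀ s : Finset V, G.IsNClique j s → s.Nonempty := by
    intro s hs
    rw [← Finset.card_pos, hs.2]
    omega
  rcases isEmpty_or_nonempty V with hV | hV
  · rw [Finset.sum_of_isEmpty]
    rw [Finset.card_eq_zero, Finset.filter_eq_empty_iff]
    intro s _
    intro hcliq
    obtain ⟨x, -⟩ := hne s hcliq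
    exact (hV.false x).elim
  · inhabit V
    set f : Finset V → V := fun s => if h : s.Nonempty then maxVert r s h else default with hf
    rw [Finset.card_eq_sum_card_fiberwise
      (f := f) (t := univ) (fun s _ => Finset.mem_univ _)]
    refine Finset.sum_congr rfl ?_
    intro v _
    rw [Finset.filter_filter]
    rw [show (mdeg G r v).choose (j-1) = ((EN G r v).powersetCard (j-1)).card by
      rw [Finset.card_powersetCard, mdeg]]
    refine Finset.card_bij' (fun s _ => s.erase v) (fun t _ => insert v t) ?_ ?_ ?_ ?_
    · intro s hs
      obtain ⟨-, hcliq, hfs⟩ := Finset.mem_filter.1 hs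
      have hsne := hne s hcliq
      rw [hf] at hfs
      simp only [dif_pos hsne] at hfs
      have hvs : v ∈ s := hfs ▸ maxVert_mem hsne
      have hmax : ∀ u ∈ s, r u ≤ r v := hfs ▸ maxVert_max hsne
      rw [Finset.mem_powersetCard]
      constructor
      · intro u hu
        obtain ⟨huv, hus⟩ := Finset.mem_erase.1 hu
        refine mem_EN.2 ⟨hcliq.1 hvs hus (Ne.symm huv), ?_⟩
        exact lt_of_le_of_ne (hmax u hus) (fun he => huv (hr he))
      · rw [Finset.card_erase_of_mem hvs, hcliq.2]
    · intro t ht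
      rw [Finset.mem_powersetCard] at ht
      have hvt : v ∉ t := fun hv => v_not_mem_EN v (ht.1 hv)
      refine Finset.mem_filter.2 ⟨Finset.mem_univ _, ⟨EN_insert_clique hcl v ht.1, ?_⟩, ?_⟩
      · rw [Finset.card_insert_of_notMem hvt, ht.2]
        omega
      · rw [hf]
        have hne' : (insert v t).Nonempty := ⟨v, Finset.mem_insert_self v t⟩
        simp only [dif_pos hne']
        refine maxVert_eq hr hne' (Finset.mem_insert_self v t) ?_
        intro u hu huv
        rcases Finset.mem_insert.1 hu with rfl | hut
        · exact absurd rfl huv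
        · exact (mem_EN.1 (ht.1 hut)).2
    · intro s hs
      obtain ⟨-, hcliq, hfs⟩ := Finset.mem_filter.1 hs
      have hsne := hne s hcliq
      rw [hf] at hfs
      simp only [dif_pos hsne] at hfs
      exact Finset.insert_erase (hfs ▸ maxVert_mem hsne)
    · intro t ht
      rw [Finset.mem_powersetCard] at ht
      exact Finset.erase_insert (fun hv => v_not_mem_EN v (ht.1 hv))

end Cnt2
lemma exists_rank [Fintype V] [DecidableEq V]
    (hdirac : ∀ T : Finset V, T.Nonempty →
      ∃ v ∈ T, G.IsClique {u | u ∈ (T : Set V) ∧ G.Adj v u}) :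
    ∃ r : V → ℕ, Function.Injective r ∧
      (∀ v, G.IsClique {u | G.Adj v u ∧ r u < r v}) := by
  classical
  have main : ∀ (n : ℕ) (T : Finset V), T.card = n →
      ∃ r : V → ℕ, Set.InjOn r ↑T ∧ (∀ v ∈ T, r v < T.card) ∧
        ∀ v ∈ T, G.IsClique {u | u ∈ (T : Set V) ∧ G.Adj v u ∧ r u < r v} := by
    intro n
    induction n with
    | zero =>
      intro T hT
      rw [Finset.card_eq_zero] at hT
      subst hT
      exact ⟨fun _ => 0, by simp [Set.InjOn], by simp, by simp⟩
    | succ n ih =>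
      intro T hT
      have hne : T.Nonempty := Finset.card_pos.1 (by omega)
      obtain ⟨v, hv, hvcl⟩ := hdirac T hne
      obtain ⟨r', hinj', hbd', hcl'⟩ := ih (T.erase v) (by
        rw [Finset.card_erase_of_mem hv]; omega)
      refine ⟨Function.update r' v n, ?_, ?_, ?_⟩
      · intro a ha b hb hab
        rcases eq_or_ne a v with hav | hav
        · rcases eq_or_ne b v with hbv | hbv
          · rw [hav, hbv]
          · rw [hav, Function.update_self, Function.update_of_ne hbv] at hab
            have := hbd' b (Finset.mem_erase.2 ⟨hbv, hb⟩)
            rw [Finset.card_erase_of_mem hv, hT] at this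
            omega
        · rcases eq_or_ne b v with hbv | hbv
          · rw [hbv, Function.update_self, Function.update_of_ne hav] at hab
            have := hbd' a (Finset.mem_erase.2 ⟨hav, ha⟩)
            rw [Finset.card_erase_of_mem hv, hT] at this
            omega
          · rw [Function.update_of_ne hav, Function.update_of_ne hbv] at hab
            exact hinj' (Finset.mem_coe.2 (Finset.mem_erase.2 ⟨hav, ha⟩))
              (Finset.mem_coe.2 (Finset.mem_erase.2 ⟨hbv, hb⟩)) hab
      · intro w hw
        rcases eq_or_ne w v with hwv | hwv
        · rw [hwv, Function.update_self]; omega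
        · rw [Function.update_of_ne hwv]
          have := hbd' w (Finset.mem_erase.2 ⟨hwv, hw⟩)
          rw [Finset.card_erase_of_mem hv, hT] at this
          omega
      · intro w hw
        rcases eq_or_ne w v with hwv | hwv
        · subst hwv
          refine hvcl.subset (fun u hu => ?_)
          exact ⟨hu.1, hu.2.1⟩
        · have hset : {u | u ∈ (T : Set V) ∧ G.Adj w u ∧
              Function.update r' v n u < Function.update r' v n w} =
              {u | u ∈ ((T.erase v : Finset V) : Set V) ∧ G.Adj w u ∧ r' u < r' w} := by
            ext u
            simp only [Set.mem_setOf_eq, Finset.coe_erase, Set.mem_diff,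
              Set.mem_singleton_iff, Finset.mem_coe]
            constructor
            · rintro ⟨huT, hadj, hlt⟩
              rcases eq_or_ne u v with rfl | huv
              · rw [Function.update_self, Function.update_of_ne hwv] at hlt
                have := hbd' w (Finset.mem_erase.2 ⟨hwv, hw⟩)
                rw [Finset.card_erase_of_mem hv, hT] at this
                omega
              · rw [Function.update_of_ne huv, Function.update_of_ne hwv] at hlt
                exact ⟨⟨huT, huv⟩, hadj, hlt⟩
            · rintro ⟨⟨huT, huv⟩, hadj, hlt⟩
              rw [Function.update_of_ne huv, Function.update_of_ne hwv]
              exact ⟨huT, hadj, hlt⟩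
          rw [hset]
          exact hcl' w (Finset.mem_erase.2 ⟨hwv, hw⟩)
  obtain ⟨r, hinj, _, hcl⟩ := main (Finset.univ.card) Finset.univ rfl
  refine ⟨r, fun a b hab => hinj (by simp) (by simp) hab, fun v => ?_⟩
  have : {u | G.Adj v u ∧ r u < r v} =
      {u | u ∈ ((Finset.univ : Finset V) : Set V) ∧ G.Adj v u ∧ r u < r v} := by
    ext u; simp
  rw [this]
  exact hcl v (Finset.mem_univ v)

lemma hockey : ∀ (k n : ℕ), k ≤ n →
    (∑ s ∈ Finset.range k, (n - 1 - s).choose (k - s)) + 1 = n.choose k := by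
  intro k
  induction k with
  | zero => simp
  | succ k ih =>
    intro n hkn
    obtain ⟨n', rfl⟩ : ∃ n', n = n' + 1 := ⟨n - 1, by omega⟩
    rw [Finset.sum_range_succ']
    have h1 : ∀ i ∈ Finset.range k, (n' + 1 - 1 - (i+1)).choose (k + 1 - (i+1)) =
        (n' - 1 - i).choose (k - i) := by
      intro i _
      congr 1 <;> omega
    rw [Finset.sum_congr rfl h1, Nat.choose_succ_succ]
    have h2 := ih n' (by omega)
    simp only [Nat.add_sub_cancel, Nat.sub_zero, Nat.succ_eq_add_one]
    omega

section Cnt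
variable [Fintype V] [DecidableEq V]

open scoped Classical in
lemma subcnt {v : V} {E : Finset V} (hv : v ∉ E) {k : ℕ} (hEk : E.card ≤ k) :
    (((Finset.univ : Finset V).powersetCard k).filter (fun Y => E ⊆ Y ∧ v ∉ Y)).card =
      (Fintype.card V - 1 - E.card).choose (k - E.card) := by
  classical
  have hEsub : E ⊆ Finset.univ.erase v := fun u hu =>
    Finset.mem_erase.2 ⟨fun he => hv (he ▸ hu), Finset.mem_univ u⟩
  have hcard : ((Finset.univ.erase v) \ E).card = Fintype.card V - 1 - E.card := by
    rw [Finset.card_sdiff_of_subset hEsub, Finset.card_erase_of_mem (Finset.mem_univ v),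
      Finset.card_univ]
  rw [← hcard, ← Finset.card_powersetCard]
  refine Finset.card_bij' (fun Y _ => Y \ E) (fun Z _ => Z ∪ E) ?_ ?_ ?_ ?_
  · intro Y hY
    have h := Finset.mem_filter.1 hY
    have hY1 := (Finset.mem_powersetCard.1 h.1).2
    have hY2 := h.2.1
    have hY3 := h.2.2
    rw [Finset.mem_powersetCard]
    constructor
    · intro u hu
      obtain ⟨huY, huE⟩ := Finset.mem_sdiff.1 hu
      exact Finset.mem_sdiff.2 ⟨Finset.mem_erase.2
        ⟨fun he => hY3 (he ▸ huY), Finset.mem_univ u⟩, huE⟩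
    · rw [Finset.card_sdiff_of_subset hY2, hY1]
  · intro Z hZ
    obtain ⟨hZ1, hZ2⟩ := Finset.mem_powersetCard.1 hZ
    have hdisj : Disjoint Z E := by
      refine Finset.disjoint_left.2 (fun u hu huE => ?_)
      exact (Finset.mem_sdiff.1 (hZ1 hu)).2 huE
    refine Finset.mem_filter.2 ⟨Finset.mem_powersetCard.2 ⟨Finset.subset_univ _, ?_⟩,
      Finset.subset_union_right, ?_⟩
    · rw [Finset.card_union_of_disjoint hdisj, hZ2]
      omega
    · intro hvmem
      rcases Finset.mem_union.1 hvmem with h | h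
      · exact (Finset.mem_erase.1 (Finset.mem_sdiff.1 (hZ1 h)).1).1 rfl
      · exact hv h
  · intro Y hY
    have h := Finset.mem_filter.1 hY
    exact Finset.sdiff_union_of_subset h.2.1
  · intro Z hZ
    obtain ⟨hZ1, _⟩ := Finset.mem_powersetCard.1 hZ
    have hdisj : Disjoint Z E := by
      refine Finset.disjoint_left.2 (fun u hu huE => ?_)
      exact (Finset.mem_sdiff.1 (hZ1 hu)).2 huE
    show (Z ∪ E) \ E = Z
    ext u
    simp only [Finset.mem_sdiff, Finset.mem_union]
    constructor
    · rintro ⟨h | h, hne⟩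
      · exact h
      · exact absurd h hne
    · intro hu
      exact ⟨Or.inl hu, fun hE => (Finset.disjoint_left.1 hdisj hu hE)⟩

open scoped Classical in
lemma subcnt0 {v : V} {E : Finset V} {k : ℕ} (hEk : k < E.card) :
    (((Finset.univ : Finset V).powersetCard k).filter (fun Y => E ⊆ Y ∧ v ∉ Y)).card = 0 := by
  rw [Finset.card_eq_zero, Finset.filter_eq_empty_iff]
  intro Y hY ⟨hE, _⟩
  have := Finset.card_le_card hE
  rw [(Finset.mem_powersetCard.1 hY).2] at this
  omega

open scoped Classical in
noncomputable def eP (r : V → ℕ) (v : V) : ℕ :=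
  ((Finset.univ : Finset V).filter (fun u => r u < r v)).card

variable {r : V → ℕ}

lemma eP_lt (hr : Function.Injective r) {u v : V} (h : r u < r v) : eP r u < eP r v := by
  classical
  refine Finset.card_lt_card ?_
  rw [Finset.ssubset_iff_of_subset]
  · exact ⟨u, by simp [h], by simp⟩
  · intro w hw
    simp only [Finset.mem_filter, Finset.mem_univ, true_and] at hw ⊢
    omega

lemma eP_le (v : V) : eP r v ≤ Fintype.card V - 1 := by
  classical
  have : (Finset.univ.filter (fun u => r u < r v)) ⊆ Finset.univ.erase v := by
    intro u hu
    simp only [Finset.mem_filter, Finset.mem_univ, true_and] at hu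
    exact Finset.mem_erase.2 ⟨fun he => by subst he; omega, Finset.mem_univ u⟩
  have h2 := Finset.card_le_card this
  rw [Finset.card_erase_of_mem (Finset.mem_univ v), Finset.card_univ] at h2
  convert h2 using 2
  unfold eP; congr

lemma eP_surj (hr : Function.Injective r) {s : ℕ} (hs : s < Fintype.card V) :
    ∃ v : V, eP r v = s := by
  classical
  have hinj : Function.Injective (eP r) := by
    intro u v h
    rcases lt_trichotomy (r u) (r v) with hlt | he | hlt
    · exact absurd h (by have := eP_lt hr hlt; omega)
    · exact hr he
    · exact absurd h (by have := eP_lt hr hlt; omega)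
  have himg : (Finset.univ.image (eP r)) ⊆ Finset.range (Fintype.card V) := by
    intro x hx
    obtain ⟨v, -, rfl⟩ := Finset.mem_image.1 hx
    have := eP_le (r := r) v
    have hpos : 0 < Fintype.card V := Fintype.card_pos_iff.2 ⟨v⟩
    rw [Finset.mem_range]
    omega
  have hcard : (Finset.univ.image (eP r)).card = Fintype.card V := by
    rw [Finset.card_image_of_injective _ hinj, Finset.card_univ]
  have heq : Finset.univ.image (eP r) = Finset.range (Fintype.card V) :=
    Finset.eq_of_subset_of_card_le himg (by rw [hcard, Finset.card_range])
  have : s ∈ Finset.univ.image (eP r) := by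
    rw [heq, Finset.mem_range]; exact hs
  obtain ⟨v, -, hv⟩ := Finset.mem_image.1 this
  exact ⟨v, hv⟩

end Cnt

lemma poly_ext {d : ℕ} {a : ℕ → ℤ}
    (h : ∀ x : ℤ, ∑ i ∈ Finset.Icc 1 d, a i * x ^ (i-1) = 0) :
    ∀ i ∈ Finset.Icc 1 d, a i = 0 := by
  intro i₀ hi₀
  set P : Polynomial ℤ := ∑ i ∈ Finset.Icc 1 d, Polynomial.C (a i) * Polynomial.X ^ (i-1)
    with hP
  have heval : ∀ x : ℤ, P.eval x = 0 := by
    intro x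
    rw [hP, Polynomial.eval_finset_sum]
    simpa using h x
  have hP0 : P = 0 := by
    apply Polynomial.funext
    intro x
    rw [heval x, Polynomial.eval_zero]
  have hc := congrArg (fun p => Polynomial.coeff p (i₀ - 1)) hP0
  simp only [hP, Polynomial.finset_sum_coeff, Polynomial.coeff_C_mul,
    Polynomial.coeff_X_pow, Polynomial.coeff_zero] at hc
  rw [Finset.sum_eq_single i₀] at hc
  · simpa using hc
  · intro i hi hne
    have h1 := Finset.mem_Icc.1 hi
    have h2 := Finset.mem_Icc.1 hi₀
    rw [if_neg (by omega)]
    ring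
  · intro h
    exact absurd hi₀ h

lemma binom_expand {m d : ℕ} (hmd : m < d) (x : ℤ) :
    (x+1)^m = ∑ i ∈ Finset.Icc 1 d, ((m.choose (i-1) : ℤ)) * x^(i-1) := by
  have h1 : ∑ i ∈ Finset.Icc 1 d, ((m.choose (i-1) : ℤ)) * x^(i-1) =
      ∑ t ∈ Finset.range d, ((m.choose t : ℤ)) * x^t := by
    refine Finset.sum_nbij' (fun i => i - 1) (fun t => t + 1) ?_ ?_ ?_ ?_ ?_
    · intro i hi
      have := Finset.mem_Icc.1 hi
      rw [Finset.mem_range]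
      show i - 1 < d
      omega
    · intro t ht
      have := Finset.mem_range.1 ht
      rw [Finset.mem_Icc]
      show 1 ≤ t + 1 ∧ t + 1 ≤ d
      omega
    · intro i hi
      have := Finset.mem_Icc.1 hi
      show i - 1 + 1 = i
      omega
    · intro t ht
      show t + 1 - 1 = t
      omega
    · intro i hi
      rfl
  rw [h1]
  have h2 : ∑ t ∈ Finset.range d, ((m.choose t : ℤ)) * x^t =
      ∑ t ∈ Finset.range (m+1), ((m.choose t : ℤ)) * x^t := by
    symm
    refine Finset.sum_subset ?_ ?_
    · intro t ht
      rw [Finset.mem_range] at ht ⊢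
      omega
    · intro t _ ht
      rw [Finset.mem_range] at ht
      rw [Nat.choose_eq_zero_of_lt (by omega)]
      simp
  rw [h2, add_pow]
  refine Finset.sum_congr rfl ?_
  intro t _
  ring


end ChordalAux

namespace ChordalAux
variable {V : Type} {G : SimpleGraph V}
set_option linter.unusedVariables false
set_option linter.unusedSectionVars false
set_option maxHeartbeats 2000000

lemma exists_prefix_walk {H : SimpleGraph V} {x y : V} :
    ∀ (p : H.Walk x y) (a : ℕ), a ≤ p.length → ∃ q : H.Walk x (p.getVert a), q.length = a := by
  intro p
  induction p with
  | nil =>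
    intro a ha
    have ha0 : a = 0 := by simpa using ha
    subst ha0
    exact ⟨SimpleGraph.Walk.nil, rfl⟩
  | @cons u w v h q ih =>
    intro a ha
    cases a with
    | zero =>
      exact ⟨SimpleGraph.Walk.nil.copy rfl (SimpleGraph.Walk.getVert_zero _).symm, rfl⟩
    | succ a =>
      obtain ⟨q', hq'⟩ := ih a (by
        rw [SimpleGraph.Walk.length_cons] at ha; omega)
      refine ⟨(SimpleGraph.Walk.cons h q').copy rfl
        (SimpleGraph.Walk.getVert_cons_succ q h).symm, ?_⟩
      rw [SimpleGraph.Walk.length_copy, SimpleGraph.Walk.length_cons, hq']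

lemma exists_suffix_walk {H : SimpleGraph V} {x y : V} :
    ∀ (p : H.Walk x y) (a : ℕ), ∃ q : H.Walk (p.getVert a) y, q.length = p.length - a := by
  intro p
  induction p with
  | nil =>
    intro a
    refine ⟨SimpleGraph.Walk.nil.copy (SimpleGraph.Walk.getVert_of_length_le _ (by simp)).symm
      rfl, by simp⟩
  | @cons u w v h q ih =>
    intro a
    cases a with
    | zero =>
      refine ⟨(SimpleGraph.Walk.cons h q).copy (SimpleGraph.Walk.getVert_zero _).symm rfl, ?_⟩
      rw [SimpleGraph.Walk.length_copy, SimpleGraph.Walk.length_cons]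
      omega
    | succ a =>
      obtain ⟨q', hq'⟩ := ih a
      refine ⟨q'.copy (SimpleGraph.Walk.getVert_cons_succ q h).symm rfl, ?_⟩
      rw [SimpleGraph.Walk.length_copy, hq', SimpleGraph.Walk.length_cons]
      omega

lemma minwalk_inj {H : SimpleGraph V} {x y : V} {p : H.Walk x y}
    (hp : p.length = H.dist x y) {a b : ℕ} (hab : a < b) (hb : b ≤ p.length) :
    p.getVert a ≠ p.getVert b := by
  intro he
  obtain ⟨q1, hq1⟩ := exists_prefix_walk p a (by omega)
  obtain ⟨q2, hq2⟩ := exists_suffix_walk p b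
  have w : H.Walk x y := q1.append ((q2.copy he.symm rfl))
  have hle := H.dist_le (q1.append ((q2.copy he.symm rfl)))
  rw [SimpleGraph.Walk.length_append, SimpleGraph.Walk.length_copy, hq1, hq2] at hle
  omega

lemma minwalk_chord {H : SimpleGraph V} {x y : V} {p : H.Walk x y}
    (hp : p.length = H.dist x y) {a b : ℕ} (hab : a < b) (hb : b ≤ p.length)
    (hadj : H.Adj (p.getVert a) (p.getVert b)) : b = a + 1 := by
  obtain ⟨q1, hq1⟩ := exists_prefix_walk p a (by omega)
  obtain ⟨q2, hq2⟩ := exists_suffix_walk p b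
  have hle := H.dist_le (q1.append (SimpleGraph.Walk.cons hadj q2))
  rw [SimpleGraph.Walk.length_append, SimpleGraph.Walk.length_cons, hq1, hq2] at hle
  omega

lemma getVert_mapLe {H H' : SimpleGraph V} (h : H ≤ H') {u v : V} (p : H.Walk u v) (i : ℕ) :
    (p.mapLe h).getVert i = p.getVert i := by
  induction p generalizing i with
  | nil => rfl
  | cons ha q ih =>
    cases i with
    | zero => rfl
    | succ i =>
      show ((SimpleGraph.Walk.cons ha q).map _).getVert (i+1) = q.getVert i
      rw [SimpleGraph.Walk.map_cons, SimpleGraph.Walk.getVert_cons_succ]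
      exact ih i

lemma length_mapLe {H H' : SimpleGraph V} (h : H ≤ H') {u v : V} (p : H.Walk u v) :
    (p.mapLe h).length = p.length := by
  simp [SimpleGraph.Walk.mapLe]

lemma two_paths_chordal (hch : IsChordal G) {x y : V} (hxy : x ≠ y) (hnadj : ¬G.Adj x y)
    (p q : G.Walk x y)
    (hp2 : 2 ≤ p.length) (hq2 : 2 ≤ q.length)
    (hpinj : ∀ a b, a < b → b ≤ p.length → p.getVert a ≠ p.getVert b)
    (hqinj : ∀ a b, a < b → b ≤ q.length → q.getVert a ≠ q.getVert b)
    (hpchord : ∀ a b, a < b → b ≤ p.length → G.Adj (p.getVert a) (p.getVert b) → b = a + 1)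
    (hqchord : ∀ a b, a < b → b ≤ q.length → G.Adj (q.getVert a) (q.getVert b) → b = a + 1)
    (hsep : ∀ a b, 0 < a → a < p.length → 0 < b → b < q.length →
      p.getVert a ≠ q.getVert b ∧ ¬G.Adj (p.getVert a) (q.getVert b)) : False := by
  classical
  set L := p.length with hL
  set M := q.length with hM
  set n := L + M with hn
  haveI : NeZero n := ⟨by omega⟩
  haveI : Fact (1 < n) := ⟨by omega⟩
  set c : G.Walk x x := p.append q.reverse with hc
  have hclen : c.length = n := by
    rw [hc, SimpleGraph.Walk.length_append, SimpleGraph.Walk.length_reverse]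
  have cval1 : ∀ t, t ≤ L → c.getVert t = p.getVert t := by
    intro t ht
    rw [hc, SimpleGraph.Walk.getVert_append]
    rcases lt_or_eq_of_le ht with h | h
    · rw [if_pos h]
    · rw [h, if_neg (lt_irrefl _), Nat.sub_self, SimpleGraph.Walk.getVert_reverse,
        Nat.sub_zero, SimpleGraph.Walk.getVert_length, SimpleGraph.Walk.getVert_length]
  have cval2 : ∀ t, L ≤ t → t ≤ n → c.getVert t = q.getVert (n - t) := by
    intro t h1 h2
    rw [hc, SimpleGraph.Walk.getVert_append, if_neg (by omega),
      SimpleGraph.Walk.getVert_reverse]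
    congr 1
    omega
  have claim : ∀ α β, α < β → β < n → G.Adj (c.getVert α) (c.getVert β) →
      ((α + 1) % n = β ∨ (β + 1) % n = α) := by
    intro α β hab hbn hadj
    by_cases hbL : β ≤ L
    · rw [cval1 α (by omega), cval1 β hbL] at hadj
      have := hpchord α β hab hbL hadj
      left
      rw [Nat.mod_eq_of_lt (by omega)]
      omega
    · push_neg at hbL
      by_cases haL : L ≤ α
      · rw [cval2 α haL (by omega), cval2 β (by omega) (by omega)] at hadj
        have := hqchord (n - β) (n - α) (by omega) (by omega) hadj.symm
        left
        rw [Nat.mod_eq_of_lt (by omega)]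
        omega
      · push_neg at haL
        rcases Nat.eq_zero_or_pos α with rfl | hα
        · rw [cval1 0 (by omega), SimpleGraph.Walk.getVert_zero,
            cval2 β (by omega) (by omega)] at hadj
          have hadj' : G.Adj (q.getVert 0) (q.getVert (n - β)) := by
            rw [SimpleGraph.Walk.getVert_zero]; exact hadj
          have h1 := hqchord 0 (n - β) (by omega) (by omega) hadj'
          right
          have hβ : β = n - 1 := by omega
          rw [hβ, Nat.sub_add_cancel (by omega), Nat.mod_self]
        · rw [cval1 α (by omega), cval2 β (by omega) (by omega)] at hadj
          exact absurd hadj (hsep α (n - β) hα haL (by omega) (by omega)).2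
  have cinj : ∀ α β, α < β → β < n → c.getVert α ≠ c.getVert β := by
    intro α β hab hbn
    by_cases hbL : β ≤ L
    · rw [cval1 α (by omega), cval1 β hbL]
      exact hpinj α β hab hbL
    · push_neg at hbL
      by_cases haL : L ≤ α
      · rw [cval2 α haL (by omega), cval2 β (by omega) (by omega)]
        exact (hqinj (n - β) (n - α) (by omega) (by omega)).symm
      · push_neg at haL
        rcases Nat.eq_zero_or_pos α with rfl | hα
        · rw [cval1 0 (by omega), SimpleGraph.Walk.getVert_zero,
            cval2 β (by omega) (by omega)]
          have h := hqinj 0 (n - β) (by omega) (by omega)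
          rw [SimpleGraph.Walk.getVert_zero] at h
          exact h
        · rw [cval1 α (by omega), cval2 β (by omega) (by omega)]
          exact (hsep α (n - β) hα haL (by omega) (by omega)).1
  set f : ZMod n → V := fun t => c.getVert t.val with hf
  have hfinj : Function.Injective f := by
    intro i j hij
    by_contra hne
    have hval : i.val ≠ j.val := fun h => hne (ZMod.val_injective n h)
    rcases lt_or_gt_of_ne hval with h | h
    · exact cinj i.val j.val h (ZMod.val_lt j) hij
    · exact cinj j.val i.val h (ZMod.val_lt i) hij.symm
  have hfadj : ∀ i : ZMod n, G.Adj (f i) (f (i + 1)) := by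
    intro i
    have hiv := ZMod.val_lt i
    have hadj := SimpleGraph.Walk.adj_getVert_succ c (show i.val < c.length by omega)
    have hv1 : (i + 1).val = (i.val + 1) % n := by
      rw [ZMod.val_add, ZMod.val_one]
    show G.Adj (c.getVert i.val) (c.getVert (i+1).val)
    by_cases hlast : i.val = n - 1
    · have h0 : (i+1).val = 0 := by
        rw [hv1, hlast, Nat.sub_add_cancel (by omega), Nat.mod_self]
      rw [h0, SimpleGraph.Walk.getVert_zero]
      have hxn : c.getVert (i.val + 1) = x := by
        rw [hlast, Nat.sub_add_cancel (by omega), ← hclen, SimpleGraph.Walk.getVert_length]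
      rw [hxn] at hadj
      exact hadj
    · have h1 : (i+1).val = i.val + 1 := by rw [hv1, Nat.mod_eq_of_lt (by omega)]
      rw [h1]
      exact hadj
  obtain ⟨i, j, hij, h1, h2, hadj⟩ := hch n (by omega) f hfinj hfadj
  have hvalne : i.val ≠ j.val := fun h => hij (ZMod.val_injective n h)
  have hs1 : (i.val + 1) % n ≠ j.val := by
    intro h
    apply h1
    apply ZMod.val_injective n
    rw [ZMod.val_add, ZMod.val_one]
    exact h
  have hs2 : (j.val + 1) % n ≠ i.val := by
    intro h
    apply h2
    apply ZMod.val_injective n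
    rw [ZMod.val_add, ZMod.val_one]
    exact h
  rcases lt_or_gt_of_ne hvalne with h | h
  · rcases claim i.val j.val h (ZMod.val_lt j) hadj with hcase | hcase
    · exact hs1 hcase
    · exact hs2 hcase
  · rcases claim j.val i.val h (ZMod.val_lt i) hadj.symm with hcase | hcase
    · exact hs2 hcase
    · exact hs1 hcase

lemma KG_le {T : Finset V} : KG G T ≤ G := fun _ _ h => h.1

lemma reach_of_mem_support [DecidableEq V] {H : SimpleGraph V} {x y z : V} (p : H.Walk x y)
    (hz : z ∈ p.support) : H.Reachable x z :=
  ⟨p.takeUntil z hz⟩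

/-- a geodesic in `KG G U`, transferred to `G`, with all its properties -/
lemma exists_nice_path {U : Finset V} {x y : V} (hre : (KG G U).Reachable x y)
    (hx : x ∈ U) :
    ∃ p : G.Walk x y, p.length = (KG G U).dist x y ∧
      (∀ a b, a < b → b ≤ p.length → p.getVert a ≠ p.getVert b) ∧
      (∀ a b, a < b → b ≤ p.length → G.Adj (p.getVert a) (p.getVert b) → b = a + 1) ∧
      (∀ t, t ≤ p.length → p.getVert t ∈ U) := by
  obtain ⟨p₀, hp₀⟩ := hre.exists_walk_length_eq_dist
  have hmem : ∀ t, t ≤ p₀.length → p₀.getVert t ∈ U := by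
    intro t ht
    exact mem_of_walk_support p₀ hx _
      (SimpleGraph.Walk.mem_support_iff_exists_getVert.2 ⟨t, rfl, ht⟩)
  refine ⟨p₀.mapLe KG_le, ?_, ?_, ?_, ?_⟩
  · rw [length_mapLe, hp₀]
  · intro a b hab hb
    rw [getVert_mapLe, getVert_mapLe]
    exact minwalk_inj hp₀ hab (by rwa [length_mapLe] at hb)
  · intro a b hab hb hadj
    rw [length_mapLe] at hb
    rw [getVert_mapLe, getVert_mapLe] at hadj
    exact minwalk_chord hp₀ hab hb ⟨hadj, hmem a (by omega), hmem b hb⟩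
  · intro t ht
    rw [getVert_mapLe]
    exact hmem t (by rwa [length_mapLe] at ht)

lemma dirac_aux [DecidableEq V] (hch : IsChordal G) :
    ∀ (N : ℕ) (T : Finset V), T.card ≤ N → T.Nonempty →
    (∃ v ∈ T, G.IsClique {u | u ∈ (T : Set V) ∧ G.Adj v u}) ∧
    (∀ a b : V, a ∈ T → b ∈ T → a ≠ b → ¬G.Adj a b →
      ∃ v ∈ T, ∃ w ∈ T, v ≠ w ∧ ¬G.Adj v w ∧
        G.IsClique {u | u ∈ (T : Set V) ∧ G.Adj v u} ∧
        G.IsClique {u | u ∈ (T : Set V) ∧ G.Adj w u}) := by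
  intro N
  induction N with
  | zero =>
    intro T hTcard hTne
    exact absurd (Finset.card_pos.2 hTne) (by omega)
  | succ N ih =>
    intro T hTcard hTne
    classical
    by_cases hcomp : ∀ u ∈ T, ∀ w ∈ T, u ≠ w → G.Adj u w
    · constructor
      · obtain ⟨v, hv⟩ := hTne
        refine ⟨v, hv, ?_⟩
        intro u hu u' hu' hne
        exact hcomp u (Finset.mem_coe.1 hu.1) u' (Finset.mem_coe.1 hu'.1) hne
      · intro a b haT hbT hne hnadj
        exact absurd (hcomp a haT b hbT hne) hnadj
    · push_neg at hcomp
      obtain ⟨a, haT, b, hbT, hab, hnadj⟩ := hcomp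
      -- minimal separator
      set cand := ((T \ {a, b}).powerset).filter
        (fun S => ¬(KG G (T \ S)).Reachable a b) with hcand
      have hS₀ : (T \ {a, b}) ∈ cand := by
        refine Finset.mem_filter.2 ⟨Finset.mem_powerset.2 (le_refl _), ?_⟩
        intro hre
        obtain ⟨z, hz1, hz2, -⟩ := last_edge hre hab
        have hz3 : z ∈ ({a, b} : Finset V) := by
          rcases Finset.mem_sdiff.1 hz2 with ⟨hzT, hz4⟩
          by_contra hz5
          exact hz4 (Finset.mem_sdiff.2 ⟨hzT, hz5⟩)
        rcases Finset.mem_insert.1 hz3 with rfl | hz6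
        · exact hnadj hz1.symm
        · rw [Finset.mem_singleton] at hz6
          subst hz6
          exact G.loopless.irrefl _ hz1
      obtain ⟨S, hScand, hSmin⟩ := Finset.exists_min_image cand Finset.card ⟨_, hS₀⟩
      have hSsub : S ⊆ T \ {a, b} := Finset.mem_powerset.1 (Finset.mem_filter.1 hScand).1
      have hSsep : ¬(KG G (T \ S)).Reachable a b := (Finset.mem_filter.1 hScand).2
      have haS : a ∉ S := fun h =>
        (Finset.mem_sdiff.1 (hSsub h)).2 (Finset.mem_insert_self a {b})
      have hbS : b ∉ S := fun h =>
        (Finset.mem_sdiff.1 (hSsub h)).2 (Finset.mem_insert.2 (Or.inr (Finset.mem_singleton_self b)))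
      have haTS : a ∈ T \ S := Finset.mem_sdiff.2 ⟨haT, haS⟩
      have hbTS : b ∈ T \ S := Finset.mem_sdiff.2 ⟨hbT, hbS⟩
      have hST : S ⊆ T := hSsub.trans (Finset.sdiff_subset)
      -- erase-membership helper
      have herase : ∀ s ∈ S, ∀ z, z ∈ T \ (S.erase s) → z ≠ s → z ∈ T \ S := by
        intro s hs z hz hzs
        obtain ⟨hzT, hz2⟩ := Finset.mem_sdiff.1 hz
        exact Finset.mem_sdiff.2 ⟨hzT, fun hzS => hz2 (Finset.mem_erase.2 ⟨hzs, hzS⟩)⟩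
      -- neighbours of each separator vertex on both sides
      have hnbr : ∀ s ∈ S,
          (∃ z, z ∈ T \ S ∧ (KG G (T \ S)).Reachable a z ∧ G.Adj s z) ∧
          (∃ z, z ∈ T \ S ∧ (KG G (T \ S)).Reachable b z ∧ G.Adj s z) := by
        intro s hs
        have hsT : s ∈ T := hST hs
        have has : a ≠ s := fun h => haS (h ▸ hs)
        have hbs : b ≠ s := fun h => hbS (h ▸ hs)
        have hre' : (KG G (T \ S.erase s)).Reachable a b := by
          by_contra hre'
          have hmem : S.erase s ∈ cand := Finset.mem_filter.2
            ⟨Finset.mem_powerset.2 ((Finset.erase_subset s S).trans hSsub), hre'⟩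
          have h1 := hSmin _ hmem
          have h2 := Finset.card_erase_of_mem hs
          have h3 : 0 < S.card := Finset.card_pos.2 ⟨s, hs⟩
          omega
        obtain ⟨p₀⟩ := hre'
        set p := (p₀.toPath : (KG G (T \ S.erase s)).Walk a b) with hp
        have hppath : p.IsPath := p₀.toPath.2
        have haTS' : a ∈ T \ S.erase s :=
          Finset.mem_sdiff.2 ⟨haT, fun h => haS (Finset.mem_of_mem_erase h)⟩
        have hsupp : ∀ z ∈ p.support, z ∈ T \ S.erase s := mem_of_walk_support p haTS'
        have hsmem : s ∈ p.support := by
          by_contra hsmem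
          refine hSsep (reach_transfer p ?_)
          intro z hz
          exact herase s hs z (hsupp z hz) (fun h => hsmem (h ▸ hz))
        constructor
        · -- a side
          have hp₁path : (p.takeUntil s hsmem).IsPath := hppath.takeUntil hsmem
          have hp₁supp := SimpleGraph.Walk.support_takeUntil_subset p hsmem
          cases hrev : (p.takeUntil s hsmem).reverse with
          | nil => exact absurd rfl has
          | cons h q =>
            have hnodup : ((p.takeUntil s hsmem).reverse).support.Nodup := by
              rw [SimpleGraph.Walk.support_reverse]
              exact List.nodup_reverse.2 hp₁path.support_nodup
            rw [hrev, SimpleGraph.Walk.support_cons] at hnodup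
            have hsq : s ∉ q.support := (List.nodup_cons.1 hnodup).1
            have hqs : ∀ z' ∈ q.support, z' ∈ T \ S := by
              intro z' hz'
              have h1 : z' ∈ ((p.takeUntil s hsmem).reverse).support := by
                rw [hrev, SimpleGraph.Walk.support_cons]
                exact List.mem_cons_of_mem _ hz'
              rw [SimpleGraph.Walk.support_reverse, List.mem_reverse] at h1
              exact herase s hs z' (hsupp z' (hp₁supp h1)) (fun he => hsq (he ▸ hz'))
            refine ⟨_, hqs _ q.start_mem_support, (reach_transfer q hqs).symm, h.1⟩
        · -- b side
          have hp₂path : (p.dropUntil s hsmem).IsPath := hppath.dropUntil hsmem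
          have hp₂supp := SimpleGraph.Walk.support_dropUntil_subset p hsmem
          cases hdrop : (p.dropUntil s hsmem) with
          | nil => exact absurd rfl (Ne.symm hbs)
          | cons h₂ q₂ =>
            have hnodup : (p.dropUntil s hsmem).support.Nodup := hp₂path.support_nodup
            rw [hdrop, SimpleGraph.Walk.support_cons] at hnodup
            have hsq : s ∉ q₂.support := (List.nodup_cons.1 hnodup).1
            have hqs : ∀ z' ∈ q₂.support, z' ∈ T \ S := by
              intro z' hz'
              have h1 : z' ∈ (p.dropUntil s hsmem).support := by
                rw [hdrop, SimpleGraph.Walk.support_cons]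
                exact List.mem_cons_of_mem _ hz'
              exact herase s hs z' (hsupp z' (hp₂supp h1)) (fun he => hsq (he ▸ hz'))
            refine ⟨_, hqs _ q₂.start_mem_support, (reach_transfer q₂ hqs).symm, h₂.1⟩
      -- the separator is a clique
      have hSclique : ∀ x ∈ S, ∀ y ∈ S, x ≠ y → G.Adj x y := by
        intro x hx y hy hxy
        by_contra hnadjxy
        obtain ⟨zxA, hzxA, hrxA, haxA⟩ := (hnbr x hx).1
        obtain ⟨zyA, hzyA, hryA, hayA⟩ := (hnbr y hy).1
        obtain ⟨zxB, hzxB, hrxB, haxB⟩ := (hnbr x hx).2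
        obtain ⟨zyB, hzyB, hryB, hayB⟩ := (hnbr y hy).2
        have hxTS : x ∉ T \ S := fun h => (Finset.mem_sdiff.1 h).2 hx
        have hyTS : y ∉ T \ S := fun h => (Finset.mem_sdiff.1 h).2 hy
        have hABdisj : ∀ z, z ∈ T \ S → (KG G (T \ S)).Reachable a z →
            (KG G (T \ S)).Reachable b z → False :=
          fun z _ h1 h2 => hSsep (h1.trans h2.symm)
        have hABnadj : ∀ zA, zA ∈ T \ S → (KG G (T \ S)).Reachable a zA →
            ∀ zB, zB ∈ T \ S → (KG G (T \ S)).Reachable b zB → ¬G.Adj zA zB := by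
          intro zA h1 h2 zB h3 h4 hadj
          exact hSsep (h2.trans ((SimpleGraph.Adj.reachable (show (KG G (T \ S)).Adj zA zB from ⟨hadj, h1, h3⟩)).trans h4.symm))
        have hside : ∀ (x' y' zx zy : V) (c : V), x' ∉ T \ S → y' ∉ T \ S → x' ≠ y' →
            zx ∈ T \ S → zy ∈ T \ S →
            (KG G (T \ S)).Reachable c zx → (KG G (T \ S)).Reachable c zy →
            G.Adj x' zx → G.Adj y' zy → ¬ G.Adj x' y' →
            ∃ p : G.Walk x' y', 2 ≤ p.length ∧
              (∀ a b, a < b → b ≤ p.length → p.getVert a ≠ p.getVert b) ∧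
              (∀ a b, a < b → b ≤ p.length → G.Adj (p.getVert a) (p.getVert b) → b = a + 1) ∧
              (∀ t, 0 < t → t < p.length →
                p.getVert t ∈ T \ S ∧ (KG G (T \ S)).Reachable c (p.getVert t)) := by
          intro x' y' zx zy c hx' hy' hx'y' hzx hzy hrzx hrzy hax hay hnadj'
          set U := insert x' (insert y' ((T \ S).filter
            (fun z => (KG G (T \ S)).Reachable c z))) with hU
          have hAU : ∀ z, z ∈ T \ S → (KG G (T \ S)).Reachable c z → z ∈ U := by
            intro z h1 h2
            exact Finset.mem_insert.2 (Or.inr (Finset.mem_insert.2 (Or.inr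
              (Finset.mem_filter.2 ⟨h1, h2⟩))))
          have hxU : x' ∈ U := Finset.mem_insert_self _ _
          have hyU : y' ∈ U := Finset.mem_insert.2 (Or.inr (Finset.mem_insert_self _ _))
          obtain ⟨w⟩ := hrzx.symm.trans hrzy
          have hsuppw : ∀ z ∈ w.support, z ∈ U := by
            intro z hz
            exact hAU z (mem_of_walk_support w hzx z hz)
              (hrzx.trans (reach_of_mem_support w hz))
          have hreU : (KG G U).Reachable x' y' := by
            refine (SimpleGraph.Adj.reachable
                (show (KG G U).Adj x' zx from ⟨hax, hxU, hAU zx hzx hrzx⟩)).trans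
              ((reach_transfer w hsuppw).trans
                (SimpleGraph.Adj.reachable
                  (show (KG G U).Adj zy y' from ⟨hay.symm, hAU zy hzy hrzy, hyU⟩)))
          obtain ⟨pw, hplen, hpinj, hpchord, hpmem⟩ := exists_nice_path hreU hxU
          have hL0 : pw.length ≠ 0 := fun h =>
            hx'y' (SimpleGraph.Walk.eq_of_length_eq_zero h)
          have hL1 : pw.length ≠ 1 := by
            intro h
            have hadj := SimpleGraph.Walk.adj_getVert_succ pw (show 0 < pw.length by omega)
            rw [SimpleGraph.Walk.getVert_zero, show (0+1 : ℕ) = pw.length by omega,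
              SimpleGraph.Walk.getVert_length] at hadj
            exact hnadj' hadj
          refine ⟨pw, by omega, hpinj, hpchord, ?_⟩
          intro t h1 h2
          have hUmem := hpmem t (by omega)
          rcases Finset.mem_insert.1 hUmem with he | hUmem2
          · exfalso
            have hne := hpinj 0 t h1 (by omega)
            rw [SimpleGraph.Walk.getVert_zero] at hne
            exact hne he.symm
          rcases Finset.mem_insert.1 hUmem2 with he | hUmem3
          · exfalso
            have hne := hpinj t pw.length h2 le_rfl
            rw [SimpleGraph.Walk.getVert_length] at hne
            exact hne he
          · exact ⟨(Finset.mem_filter.1 hUmem3).1, (Finset.mem_filter.1 hUmem3).2⟩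
        obtain ⟨pw, hp2, hpinj, hpchord, hpint⟩ :=
          hside x y zxA zyA a hxTS hyTS hxy hzxA hzyA hrxA hryA haxA hayA hnadjxy
        obtain ⟨qw, hq2, hqinj, hqchord, hqint⟩ :=
          hside x y zxB zyB b hxTS hyTS hxy hzxB hzyB hrxB hryB haxB hayB hnadjxy
        refine two_paths_chordal hch hxy hnadjxy pw qw hp2 hq2 hpinj hqinj hpchord hqchord ?_
        intro a' b' h1 h2 h3 h4
        obtain ⟨hpa1, hpa2⟩ := hpint a' h1 h2
        obtain ⟨hqb1, hqb2⟩ := hqint b' h3 h4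
        constructor
        · intro he
          exact hABdisj _ hpa1 hpa2 (he ▸ hqb2)
        · exact hABnadj _ hpa1 hpa2 _ hqb1 hqb2
      -- grow a simplicial vertex on a given side
      have key : ∀ (a' b' : V), a' ∈ T \ S → b' ∈ T → b' ∉ S →
          ¬(KG G (T \ S)).Reachable a' b' →
          ∃ v, (v ∈ T \ S ∧ (KG G (T \ S)).Reachable a' v) ∧
            G.IsClique {u | u ∈ (T : Set V) ∧ G.Adj v u} := by
        intro a' b' ha' hb'T hb'S hnr
        set A' := (T \ S).filter (fun z => (KG G (T \ S)).Reachable a' z) with hA'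
        have ha'A : a' ∈ A' := Finset.mem_filter.2 ⟨ha', SimpleGraph.Reachable.refl _⟩
        have hb'A : b' ∉ A' := fun h => hnr (Finset.mem_filter.1 h).2
        have hb'TA : b' ∉ A' ∪ S := by
          rw [Finset.mem_union]
          push_neg
          exact ⟨hb'A, hb'S⟩
        have hclos : ∀ v ∈ A', ∀ u, u ∈ T → G.Adj v u → u ∈ A' ∪ S := by
          intro v hv u huT hadj
          by_cases huS : u ∈ S
          · exact Finset.mem_union_right _ huS
          · have huTS : u ∈ T \ S := Finset.mem_sdiff.2 ⟨huT, huS⟩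
            obtain ⟨hvTS, hvre⟩ := Finset.mem_filter.1 hv
            exact Finset.mem_union_left _ (Finset.mem_filter.2
              ⟨huTS, hvre.trans (SimpleGraph.Adj.reachable (show (KG G (T \ S)).Adj v u from ⟨hadj, hvTS, huTS⟩))⟩)
        have hsubT : A' ∪ S ⊆ T := by
          intro u hu
          rcases Finset.mem_union.1 hu with h | h
          · exact (Finset.mem_sdiff.1 (Finset.mem_filter.1 h).1).1
          · exact hST h
        have hcardTA : (A' ∪ S).card ≤ N := by
          have hsub2 : A' ∪ S ⊆ T.erase b' := fun u hu =>
            Finset.mem_erase.2 ⟨fun he => hb'TA (he ▸ hu), hsubT hu⟩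
          have h1 := Finset.card_le_card hsub2
          rw [Finset.card_erase_of_mem hb'T] at h1
          have h3 : 0 < T.card := Finset.card_pos.2 hTne
          omega
        have hlift : ∀ v ∈ A',
            G.IsClique {u | u ∈ ((A' ∪ S : Finset V) : Set V) ∧ G.Adj v u} →
            G.IsClique {u | u ∈ (T : Set V) ∧ G.Adj v u} := by
          intro v hv hcl
          refine hcl.subset ?_
          intro u hu
          exact ⟨Finset.mem_coe.2 (hclos v hv u (Finset.mem_coe.1 hu.1) hu.2), hu.2⟩
        by_cases hcompTA : ∀ u ∈ A' ∪ S, ∀ w ∈ A' ∪ S, u ≠ w → G.Adj u w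
        · refine ⟨a', ⟨ha', SimpleGraph.Reachable.refl _⟩, hlift a' ha'A ?_⟩
          intro u hu u' hu' hne
          exact hcompTA u (Finset.mem_coe.1 hu.1) u' (Finset.mem_coe.1 hu'.1) hne
        · push_neg at hcompTA
          obtain ⟨u₁, hu₁, w₁, hw₁, hne₁, hnadj₁⟩ := hcompTA
          obtain ⟨v, hvTA, w, hwTA, hvw, hnadjvw, hsv, hsw⟩ :=
            (ih (A' ∪ S) hcardTA ⟨a', Finset.mem_union_left _ ha'A⟩).2 u₁ w₁ hu₁ hw₁ hne₁ hnadj₁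
          have hcase : v ∈ A' ∨ w ∈ A' := by
            rcases Finset.mem_union.1 hvTA with h | h
            · exact Or.inl h
            · rcases Finset.mem_union.1 hwTA with h' | h'
              · exact Or.inr h'
              · exact absurd (hSclique v h w h' hvw) hnadjvw
          rcases hcase with h | h
          · exact ⟨v, ⟨(Finset.mem_filter.1 h).1, (Finset.mem_filter.1 h).2⟩, hlift v h hsv⟩
          · exact ⟨w, ⟨(Finset.mem_filter.1 h).1, (Finset.mem_filter.1 h).2⟩, hlift w h hsw⟩
      obtain ⟨vA, ⟨hvATS, hvAre⟩, hvAsim⟩ := key a b haTS hbT hbS hSsep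
      obtain ⟨vB, ⟨hvBTS, hvBre⟩, hvBsim⟩ := key b a hbTS haT haS (fun h => hSsep h.symm)
      have hvAvB : vA ≠ vB := fun he => hSsep (hvAre.trans (he ▸ hvBre).symm)
      have hnadjAB : ¬G.Adj vA vB := fun hadj =>
        hSsep (hvAre.trans ((SimpleGraph.Adj.reachable (show (KG G (T \ S)).Adj vA vB from ⟨hadj, hvATS, hvBTS⟩)).trans hvBre.symm))
      have hvAT : vA ∈ T := (Finset.mem_sdiff.1 hvATS).1
      have hvBT : vB ∈ T := (Finset.mem_sdiff.1 hvBTS).1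
      exact ⟨⟨vA, hvAT, hvAsim⟩,
        fun _ _ _ _ _ _ => ⟨vA, hvAT, vB, hvBT, hvAvB, hnadjAB, hvAsim, hvBsim⟩⟩

lemma dirac (hch : IsChordal G) : ∀ T : Finset V, T.Nonempty →
    ∃ v ∈ T, G.IsClique {u | u ∈ (T : Set V) ∧ G.Adj v u} := by
  classical
  exact fun T hT => (dirac_aux hch T.card T le_rfl hT).1


section Main
variable [Fintype V] [DecidableEq V] {r : V → ℕ}

lemma eP_inj (hr : Function.Injective r) : Function.Injective (eP (V := V) r) := by
  intro u v h
  rcases lt_trichotomy (r u) (r v) with hlt | he | hlt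
  · exact absurd h (by have := eP_lt hr hlt; omega)
  · exact hr he
  · exact absurd h (by have := eP_lt hr hlt; omega)

lemma mdeg_le_eP (v : V) : mdeg G r v ≤ eP r v := by
  classical
  refine Finset.card_le_card (fun u hu => ?_)
  rcases mem_EN.1 hu with ⟨-, hlt⟩
  simp only [Finset.mem_filter, Finset.mem_univ, true_and]
  convert hlt

lemma mdeg_ge (hr : Function.Injective r)
    (hcl : ∀ v, G.IsClique {u | G.Adj v u ∧ r u < r v}) (v : V) :
    min (eP r v) (vertexConnectivity G) ≤ mdeg G r v := by
  classical
  by_contra hc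
  push_neg at hc
  rw [lt_min_iff] at hc
  obtain ⟨h1, h2⟩ := hc
  have hnotcut : ¬ IsVertexCut G (EN G r v) := by
    intro hcut
    have hle : vertexConnectivity G ≤ (EN G r v).card :=
      Nat.sInf_le ⟨EN G r v, hcut, rfl⟩
    have : mdeg G r v = (EN G r v).card := rfl
    omega
  have hconn : (G.induce (↑((EN G r v)ᶜ) : Set V)).Connected := not_not.1 hnotcut
  have hsub : ¬ ((Finset.univ.filter (fun u => r u < r v)) ⊆ EN G r v) := by
    intro hsub
    have h3 := Finset.card_le_card hsub
    have h4 : eP r v ≤ (Finset.univ.filter (fun u => r u < r v)).card := by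
      unfold eP
      apply le_of_eq
      congr 1
    have : mdeg G r v = (EN G r v).card := rfl
    omega
  obtain ⟨u, hu, huY⟩ := Finset.not_subset.1 hsub
  have hru : r u < r v := (Finset.mem_filter.1 hu).2
  have hvY : v ∉ EN G r v := v_not_mem_EN v
  have huc : u ∈ (EN G r v)ᶜ := Finset.mem_compl.2 huY
  have hvc : v ∈ (EN G r v)ᶜ := Finset.mem_compl.2 hvY
  have hre := hconn.preconnected ⟨u, Finset.mem_coe.2 huc⟩ ⟨v, Finset.mem_coe.2 hvc⟩
  have hK := induce_to_KG hre
  obtain ⟨z, hz1, hz2, hz3⟩ := exists_earlier_nbr hr hcl ((EN G r v)ᶜ).card ((EN G r v)ᶜ)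
    le_rfl huc hvc hK hru
  exact (Finset.mem_compl.1 hz1) (mem_EN.2 ⟨hz2, hz3⟩)

lemma sum_beta_eq (hr : Function.Injective r)
    (hcl : ∀ v, G.IsClique {u | G.Adj v u ∧ r u < r v}) {d : ℕ}
    (hdmax : ∀ (m : ℕ) (s : Finset V), G.IsNClique m s → m ≤ d) (x : ℤ) :
    ∑ i ∈ Finset.Icc 1 d,
        ((Finset.univ.filter (fun v => mdeg G r v = i - 1)).card : ℤ) * (x+1)^(i-1) =
      ∑ i ∈ Finset.Icc 1 d, (cliqueCount G i : ℤ) * x^(i-1) := by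
  classical
  have hmd : ∀ v : V, mdeg G r v < d := fun v => by
    have := hdmax _ _ (EN_isNClique hcl v); omega
  have h1 : ∀ i ∈ Finset.Icc 1 d, (cliqueCount G i : ℤ) * x^(i-1) =
      ∑ v : V, ((mdeg G r v).choose (i-1) : ℤ) * x^(i-1) := by
    intro i hi
    rw [cliqueCount_eq hr hcl (Finset.mem_Icc.1 hi).1]
    push_cast
    rw [Finset.sum_mul]
  rw [Finset.sum_congr rfl h1, Finset.sum_comm]
  have h2 : ∀ v : V, ∑ i ∈ Finset.Icc 1 d, ((mdeg G r v).choose (i-1) : ℤ) * x^(i-1)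
      = (x+1)^(mdeg G r v) := fun v => (binom_expand (hmd v) x).symm
  rw [Finset.sum_congr rfl (fun v _ => h2 v)]
  rw [← Finset.sum_fiberwise_of_maps_to (g := fun v => mdeg G r v + 1) (t := Finset.Icc 1 d)
      (fun v _ => Finset.mem_Icc.2 ⟨Nat.le_add_left 1 (mdeg G r v), Nat.succ_le_of_lt (hmd v)⟩)
      (fun v => (x+1)^(mdeg G r v))]
  refine Finset.sum_congr rfl ?_
  intro j hj
  obtain ⟨hj1, hj2⟩ := Finset.mem_Icc.1 hj
  have hfe : Finset.univ.filter (fun v => mdeg G r v + 1 = j)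
      = Finset.univ.filter (fun v => mdeg G r v = j - 1) := by
    ext v
    simp only [Finset.mem_filter, Finset.mem_univ, true_and]
    omega
  rw [Finset.sum_congr hfe (fun v hv => by
    rw [(Finset.mem_filter.1 hv).2])]
  rw [Finset.sum_const, nsmul_eq_mul]

end Main
end ChordalAux


/-- For a non-complete chordal graph `G` with largest clique size `d`, vertex connectivity
`κ`, and `b`-vector `b`, one has
`b i = Σ_{|Y| = i-1} (W(G-Y) - 1) + 1` for every `1 ≤ i ≤ κ + 1`. -/
theorem stmt0 {V : Type} [Fintype V] [DecidableEq V] (G : SimpleGraph V)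
    (hnc : G ≠ ⊤) (hch : IsChordal G)
    (d : ℕ) (hd : ∃ s : Finset V, G.IsNClique d s)
    (hdmax : ∀ (m : ℕ) (s : Finset V), G.IsNClique m s → m ≤ d)
    (b : ℕ → ℤ)
    (hb : ∀ x : ℤ, ∑ i ∈ Finset.Icc 1 d, b i * (x + 1) ^ (i - 1) =
      ∑ i ∈ Finset.Icc 1 d, (cliqueCount G i : ℤ) * x ^ (i - 1))
    (i : ℕ) (hi1 : 1 ≤ i) (hi2 : i ≤ vertexConnectivity G + 1) :
    b i = (∑ Y ∈ Finset.powersetCard (i - 1) (Finset.univ : Finset V),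
      ((numComponents G Y : ℤ) - 1)) + 1 := by
  classical
  open ChordalAux in
  obtain ⟨r, hr, hcl⟩ := ChordalAux.exists_rank (G := G) (ChordalAux.dirac hch)
  set κ := vertexConnectivity G with hκ
  set n := Fintype.card V with hn
  set k := i - 1 with hk
  have hkκ : k ≤ κ := by omega
  -- nonadjacent pair
  obtain ⟨u₀, w₀, hne₀, hnadj₀⟩ : ∃ u w : V, u ≠ w ∧ ¬ G.Adj u w := by
    by_contra h
    push_neg at h
    apply hnc
    ext u v
    simp only [SimpleGraph.top_adj]
    exact ⟨fun ha => ha.ne, fun hne => h u v hne⟩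
  have hVne : Nonempty V := ⟨u₀⟩
  have hnpos : 0 < n := by rw [hn]; exact Fintype.card_pos
  -- a vertex cut of size n - 2
  have hY₀ : IsVertexCut G (Finset.univ \ {u₀, w₀}) := by
    intro hconn
    have hc : ((Finset.univ \ {u₀, w₀} : Finset V)ᶜ) = {u₀, w₀} := by
      ext z
      simp only [Finset.mem_compl, Finset.mem_sdiff, Finset.mem_univ, true_and, not_not,
        Finset.mem_insert, Finset.mem_singleton, not_and]
      try tauto
    rw [hc] at hconn
    have h1 : u₀ ∈ ({u₀, w₀} : Finset V) := by simp
    have h2 : w₀ ∈ ({u₀, w₀} : Finset V) := by simp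
    have hre := hconn.preconnected ⟨u₀, Finset.mem_coe.2 h1⟩ ⟨w₀, Finset.mem_coe.2 h2⟩
    obtain ⟨z, hz1, hz2, -⟩ := ChordalAux.last_edge (ChordalAux.induce_to_KG hre) hne₀
    rcases Finset.mem_insert.1 hz2 with rfl | hz2
    · exact hnadj₀ hz1.symm
    · rw [Finset.mem_singleton] at hz2
      subst hz2
      exact (G.loopless.irrefl _) hz1
  have hcard2 : ({u₀, w₀} : Finset V).card = 2 := Finset.card_pair hne₀
  have hn2 : 2 ≤ n := by
    have h := Finset.card_le_univ ({u₀, w₀} : Finset V)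
    rw [hcard2] at h
    omega
  have hκn : κ ≤ n - 2 := by
    have h1 : κ ≤ (Finset.univ \ {u₀, w₀}).card := Nat.sInf_le ⟨_, hY₀, rfl⟩
    have h2 : (Finset.univ \ {u₀, w₀}).card = n - 2 := by
      rw [Finset.card_sdiff_of_subset (Finset.subset_univ _), hcard2, Finset.card_univ, hn]
    omega
  -- κ + 1 ≤ d
  obtain ⟨vt, hvt⟩ := ChordalAux.eP_surj hr (show n - 1 < n by omega)
  have hmt := ChordalAux.mdeg_ge hr hcl vt
  rw [hvt] at hmt
  have hκm : κ ≤ ChordalAux.mdeg G r vt := by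
    rcases min_cases (n-1) κ with ⟨he, hle⟩ | ⟨he, hle⟩ <;> omega
  have hmtd := hdmax _ _ (ChordalAux.EN_isNClique hcl vt)
  have hκd : κ + 1 ≤ d := by omega
  have hid : i ≤ d := by omega
  have hkn : k ≤ n := by omega
  -- b i = β i
  have hzero : ∀ y : ℤ, ∑ j ∈ Finset.Icc 1 d,
      (b j - ((Finset.univ.filter (fun v => ChordalAux.mdeg G r v = j - 1)).card : ℤ))
        * y^(j-1) = 0 := by
    intro y
    have h1 := hb (y - 1)
    have h2 := ChordalAux.sum_beta_eq hr hcl hdmax (y - 1)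
    rw [sub_add_cancel] at h1 h2
    have h3 : ∑ j ∈ Finset.Icc 1 d,
        (b j - ((Finset.univ.filter (fun v => ChordalAux.mdeg G r v = j - 1)).card : ℤ))
          * y^(j-1) =
        (∑ j ∈ Finset.Icc 1 d, b j * y^(j-1)) -
        ∑ j ∈ Finset.Icc 1 d,
          ((Finset.univ.filter (fun v => ChordalAux.mdeg G r v = j - 1)).card : ℤ) * y^(j-1) := by
      rw [← Finset.sum_sub_distrib]
      exact Finset.sum_congr rfl (fun j _ => by ring)
    rw [h3, h1, h2, sub_self]
  have hbeq : b i = ((Finset.univ.filter (fun v => ChordalAux.mdeg G r v = i - 1)).card : ℤ) := by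
    have h := ChordalAux.poly_ext hzero i (Finset.mem_Icc.2 ⟨hi1, hid⟩)
    linarith
  -- the sum of numbers of components
  have hcnt1 : ∀ Y : Finset V, numComponents G Y = (ChordalAux.FF G r Y).card :=
    fun Y => ChordalAux.comp_count hr hcl Y
  have hsum : ∑ Y ∈ Finset.powersetCard k (Finset.univ : Finset V), (ChordalAux.FF G r Y).card
      = (n.choose k - 1) + (Finset.univ.filter (fun v => ChordalAux.mdeg G r v = i - 1)).card := by
    have e1 : ∀ Y : Finset V, (ChordalAux.FF G r Y).card =
        ∑ v : V, if (ChordalAux.EN G r v ⊆ Y ∧ v ∉ Y) then 1 else 0 := by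
      intro Y
      unfold ChordalAux.FF
      rw [Finset.card_filter]
      refine Finset.sum_congr rfl (fun v _ => ?_)
      exact if_congr and_comm rfl rfl
    rw [Finset.sum_congr rfl (fun Y _ => e1 Y), Finset.sum_comm]
    have e2 : ∀ v : V, (∑ Y ∈ Finset.powersetCard k (Finset.univ : Finset V),
        if (ChordalAux.EN G r v ⊆ Y ∧ v ∉ Y) then 1 else 0) =
        ((Finset.powersetCard k (Finset.univ : Finset V)).filter
          (fun Y => ChordalAux.EN G r v ⊆ Y ∧ v ∉ Y)).card := by
      intro v; rw [Finset.card_filter]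
    rw [Finset.sum_congr rfl (fun v _ => e2 v)]
    rw [← Finset.sum_filter_add_sum_filter_not Finset.univ (fun v => ChordalAux.mdeg G r v < k)]
    rw [← Finset.sum_filter_add_sum_filter_not
      (Finset.univ.filter (fun v => ¬ ChordalAux.mdeg G r v < k))
      (fun v => ChordalAux.mdeg G r v = k)]
    have hT3 : ∑ v ∈ (Finset.univ.filter (fun v => ¬ ChordalAux.mdeg G r v < k)).filter
        (fun v => ¬ ChordalAux.mdeg G r v = k),
        ((Finset.powersetCard k (Finset.univ : Finset V)).filter
          (fun Y => ChordalAux.EN G r v ⊆ Y ∧ v ∉ Y)).card = 0 := by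
      refine Finset.sum_eq_zero ?_
      intro v hv
      obtain ⟨h1', h2'⟩ := Finset.mem_filter.1 hv
      have h1'' := (Finset.mem_filter.1 h1').2
      have hm : ChordalAux.mdeg G r v = (ChordalAux.EN G r v).card := rfl
      exact ChordalAux.subcnt0 (by omega)
    have hT2 : ∑ v ∈ (Finset.univ.filter (fun v => ¬ ChordalAux.mdeg G r v < k)).filter
        (fun v => ChordalAux.mdeg G r v = k),
        ((Finset.powersetCard k (Finset.univ : Finset V)).filter
          (fun Y => ChordalAux.EN G r v ⊆ Y ∧ v ∉ Y)).card =
        (Finset.univ.filter (fun v => ChordalAux.mdeg G r v = i - 1)).card := by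
      have hset : (Finset.univ.filter (fun v => ¬ ChordalAux.mdeg G r v < k)).filter
          (fun v => ChordalAux.mdeg G r v = k) =
          Finset.univ.filter (fun v => ChordalAux.mdeg G r v = i - 1) := by
        ext v
        simp only [Finset.mem_filter, Finset.mem_univ, true_and]
        omega
      rw [hset]
      rw [Finset.sum_congr rfl (fun v hv => ?_)]
      · rw [Finset.sum_const, smul_eq_mul, mul_one]
      · have hmv := (Finset.mem_filter.1 hv).2
        have hm : ChordalAux.mdeg G r v = (ChordalAux.EN G r v).card := rfl
        rw [ChordalAux.subcnt (ChordalAux.v_not_mem_EN v) (by omega)]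
        rw [show k - (ChordalAux.EN G r v).card = 0 by omega]
        exact Nat.choose_zero_right _
    have hT1 : ∑ v ∈ Finset.univ.filter (fun v => ChordalAux.mdeg G r v < k),
        ((Finset.powersetCard k (Finset.univ : Finset V)).filter
          (fun Y => ChordalAux.EN G r v ⊆ Y ∧ v ∉ Y)).card = n.choose k - 1 := by
      have hsetA : Finset.univ.filter (fun v => ChordalAux.mdeg G r v < k) =
          Finset.univ.filter (fun v => ChordalAux.eP r v < k) := by
        ext v
        simp only [Finset.mem_filter, Finset.mem_univ, true_and]
        constructor
        · intro h
          have h2 := ChordalAux.mdeg_ge hr hcl v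
          rcases min_cases (ChordalAux.eP r v) κ with ⟨he, hle⟩ | ⟨he, hle⟩ <;> omega
        · intro h
          have := ChordalAux.mdeg_le_eP (G := G) (r := r) v
          omega
      have hval : ∀ v ∈ Finset.univ.filter (fun v => ChordalAux.eP r v < k),
          ((Finset.powersetCard k (Finset.univ : Finset V)).filter
            (fun Y => ChordalAux.EN G r v ⊆ Y ∧ v ∉ Y)).card =
          (n - 1 - ChordalAux.eP r v).choose (k - ChordalAux.eP r v) := by
        intro v hv
        have hev := (Finset.mem_filter.1 hv).2
        have hle := ChordalAux.mdeg_le_eP (G := G) (r := r) v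
        have hge := ChordalAux.mdeg_ge hr hcl v
        have hme : ChordalAux.mdeg G r v = ChordalAux.eP r v := by
          rcases min_cases (ChordalAux.eP r v) κ with ⟨he, hle'⟩ | ⟨he, hle'⟩ <;> omega
        have hm : ChordalAux.mdeg G r v = (ChordalAux.EN G r v).card := rfl
        rw [ChordalAux.subcnt (ChordalAux.v_not_mem_EN v) (by omega)]
        rw [← hm, hme, hn]
      rw [hsetA, Finset.sum_congr rfl hval]
      have hbj : ∑ v ∈ Finset.univ.filter (fun v => ChordalAux.eP r v < k),
          (n - 1 - ChordalAux.eP r v).choose (k - ChordalAux.eP r v) =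
          ∑ s ∈ Finset.range k, (n - 1 - s).choose (k - s) := by
        refine Finset.sum_bij (fun v _ => ChordalAux.eP r v) ?_ ?_ ?_ ?_
        · intro v hv
          rw [Finset.mem_range]
          exact (Finset.mem_filter.1 hv).2
        · intro u hu v hv h
          exact ChordalAux.eP_inj hr h
        · intro s hs
          have hsk := Finset.mem_range.1 hs
          obtain ⟨v, hv⟩ := ChordalAux.eP_surj hr (show s < n by omega)
          refine ⟨v, Finset.mem_filter.2 ⟨Finset.mem_univ v, by omega⟩, hv⟩
        · intro v hv
          rfl
      rw [hbj]
      have := ChordalAux.hockey k n hkn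
      omega
    omega
  -- final computation
  have hfin : ∑ Y ∈ Finset.powersetCard k (Finset.univ : Finset V),
      ((numComponents G Y : ℤ) - 1) =
      ((∑ Y ∈ Finset.powersetCard k (Finset.univ : Finset V),
        (ChordalAux.FF G r Y).card : ℕ) : ℤ) - (n.choose k : ℤ) := by
    rw [Finset.sum_sub_distrib]
    congr 1
    · rw [Nat.cast_sum]
      refine Finset.sum_congr rfl (fun Y _ => ?_)
      rw [hcnt1 Y]
    · rw [Finset.sum_const, nsmul_eq_mul, mul_one, Finset.card_powersetCard,
        Finset.card_univ, ← hn]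
  have hchpos : 1 ≤ n.choose k := Nat.choose_pos hkn
  rw [hfin, hsum, hbeq]
  push_cast [Nat.cast_sub hchpos]
  ring
end

section
/- Let G be a finite simple graph that is not complete, let G be chordal, and let d be the largest cardinality of a clique in G. Then b_i ≤ d_i(G) for every i = 1, …, d. -/
open Finset

namespace ChordalAux

open SimpleGraph Walk

variable {V : Type*} {G : SimpleGraph V}

lemma getVert_mem_support' {s t : V} (w : G.Walk s t) (n : ℕ) : w.getVert n ∈ w.support := by
  induction w generalizing n with
  | nil => simp [Walk.getVert]
  | cons h p ih =>
    cases n with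
    | zero => simp [Walk.getVert]
    | succ n => simp only [Walk.getVert, support_cons, List.mem_cons]; exact Or.inr (ih n)

lemma exists_drop_walk {s t : V} (w : G.Walk s t) (q : ℕ) (hq : q ≤ w.length) :
    ∃ w' : G.Walk (w.getVert q) t, w'.length + q = w.length ∧
      ∀ x ∈ w'.support, x ∈ w.support := by
  induction w generalizing q with
  | nil =>
    simp only [length_nil, Nat.le_zero] at hq
    subst hq
    exact ⟨.nil, rfl, by simp⟩
  | @cons u v t h p ih =>
    cases q with
    | zero =>
      exact ⟨(Walk.cons h p).copy (getVert_zero _).symm rfl, by simp, by simp⟩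
    | succ q =>
      obtain ⟨w', hl, hs⟩ := ih q (by simp only [length_cons] at hq; omega)
      refine ⟨w'.copy rfl rfl, ?_, ?_⟩
      · change w'.length + (q + 1) = p.length + 1; omega
      · intro x hx
        change x ∈ w'.support at hx
        simp only [support_cons, List.mem_cons]
        exact Or.inr (hs x hx)

lemma exists_shortcut {s t : V} (w : G.Walk s t) (p q : ℕ) (hpq : p + 2 ≤ q)
    (hq : q ≤ w.length) (hadj : G.Adj (w.getVert p) (w.getVert q)) :
    ∃ w' : G.Walk s t, w'.length < w.length ∧ ∀ x ∈ w'.support, x ∈ w.support := by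
  induction w generalizing p q with
  | nil => simp only [length_nil] at hq; omega
  | @cons u v t h pw ih =>
    cases p with
    | zero =>
      obtain ⟨w2, hl, hs⟩ := exists_drop_walk (Walk.cons h pw) q hq
      refine ⟨Walk.cons (by simpa using hadj) w2, ?_, ?_⟩
      · simp only [length_cons] at *; omega
      · intro x hx
        simp only [support_cons, List.mem_cons] at hx ⊢
        rcases hx with rfl | hx
        · exact Or.inl rfl
        · simpa using hs x hx
    | succ p =>
      cases q with
      | zero => omega
      | succ q =>
        simp only [getVert_cons_succ] at hadj
        obtain ⟨w', hl, hs⟩ := ih p q (by omega) (by simp only [length_cons] at hq; omega) hadj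
        refine ⟨Walk.cons h w', by simp only [length_cons]; omega, ?_⟩
        intro x hx
        simp only [support_cons, List.mem_cons] at hx ⊢
        rcases hx with rfl | hx
        · exact Or.inl rfl
        · exact Or.inr (hs x hx)

lemma IsPath.getVert_injOn' {s t : V} {w : G.Walk s t} (hw : w.IsPath) :
    ∀ p ≤ w.length, ∀ q ≤ w.length, w.getVert p = w.getVert q → p = q := by
  induction w with
  | nil => intro p hp q hq _; simp only [length_nil] at hp hq; omega
  | @cons u v t h pw ih =>
    intro p hp q hq heq
    have hpath := hw.of_cons
    have hhead : u ∉ pw.support := by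
      have := hw.support_nodup
      simp only [support_cons, List.nodup_cons] at this
      exact this.1
    cases p with
    | zero =>
      cases q with
      | zero => rfl
      | succ q =>
        exfalso
        simp only [getVert_zero, getVert_cons_succ] at heq
        exact hhead (heq ▸ getVert_mem_support' pw q)
    | succ p =>
      cases q with
      | zero =>
        exfalso
        simp only [getVert_zero, getVert_cons_succ] at heq
        exact hhead (heq.symm ▸ getVert_mem_support' pw p)
      | succ q =>
        simp only [getVert_cons_succ] at heq
        simp only [length_cons] at hp hq
        exact congrArg Nat.succ (ih hpath p (by omega) q (by omega) heq)

/-- The key lemma: if `s, t` both have neighbours in each of two "separated" connected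
pieces `A` and `B`, then chordality forces `s` and `t` to be adjacent. -/
lemma adj_of_separator [DecidableEq V] (hch : IsChordal G)
    (A B : Finset V) (s t : V) (hst : s ≠ t)
    (hconnA : ∀ u ∈ A, ∀ u' ∈ A, ∃ w : G.Walk u u', ∀ x ∈ w.support, x ∈ A)
    (hconnB : ∀ u ∈ B, ∀ u' ∈ B, ∃ w : G.Walk u u', ∀ x ∈ w.support, x ∈ B)
    (hsA : s ∉ A) (htA : t ∉ A) (hsB : s ∉ B) (htB : t ∉ B)
    (hdisj : ∀ x ∈ A, ∀ y ∈ B, x ≠ y ∧ ¬ G.Adj x y)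
    (hsA' : ∃ u ∈ A, G.Adj s u) (htA' : ∃ u ∈ A, G.Adj t u)
    (hsB' : ∃ u ∈ B, G.Adj s u) (htB' : ∃ u ∈ B, G.Adj t u) :
    G.Adj s t := by
  classical
  by_contra hadjst
  -- construct a good walk through A
  have exgood : ∀ (C : Finset V), (∀ u ∈ C, ∀ u' ∈ C, ∃ w : G.Walk u u', ∀ x ∈ w.support, x ∈ C) →
      (∃ u ∈ C, G.Adj s u) → (∃ u ∈ C, G.Adj t u) →
      ∃ w : G.Walk s t, w.IsPath ∧ ∀ x ∈ w.support, x = s ∨ x = t ∨ x ∈ C := by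
    intro C hconn hs ht
    obtain ⟨u0, hu0, hsu0⟩ := hs
    obtain ⟨u1, hu1, htu1⟩ := ht
    obtain ⟨w0, hw0⟩ := hconn u0 hu0 u1 hu1
    refine ⟨(Walk.cons hsu0 (w0.concat htu1.symm)).bypass, Walk.bypass_isPath _, ?_⟩
    intro x hx
    have hx' := Walk.support_bypass_subset _ hx
    rw [Walk.support_cons] at hx'
    rcases List.mem_cons.mp hx' with rfl | hx2
    · exact Or.inl rfl
    · rw [Walk.support_concat] at hx2
      have hx3 : x ∈ w0.support ∨ x = t := by
        simpa [List.concat_eq_append] using hx2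
      rcases hx3 with hx3 | rfl
      · exact Or.inr (Or.inr (hw0 x hx3))
      · exact Or.inr (Or.inl rfl)
  -- minimal good paths
  have mingood : ∀ (C : Finset V),
      (∃ w : G.Walk s t, w.IsPath ∧ ∀ x ∈ w.support, x = s ∨ x = t ∨ x ∈ C) →
      ∃ w : G.Walk s t, w.IsPath ∧ (∀ x ∈ w.support, x = s ∨ x = t ∨ x ∈ C) ∧
        (∀ w' : G.Walk s t, (∀ x ∈ w'.support, x = s ∨ x = t ∨ x ∈ C) →
          w.length ≤ w'.length) := by
    intro C hex
    set L := {n | ∃ w : G.Walk s t, w.IsPath ∧ (∀ x ∈ w.support, x = s ∨ x = t ∨ x ∈ C) ∧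
      w.length = n} with hL
    have hLne : L.Nonempty := by
      obtain ⟨w, hp, hg⟩ := hex
      exact ⟨w.length, w, hp, hg, rfl⟩
    obtain ⟨w, hp, hg, hlen⟩ := Nat.sInf_mem hLne
    refine ⟨w, hp, hg, ?_⟩
    intro w' hg'
    have : w'.bypass.length ∈ L := by
      refine ⟨w'.bypass, Walk.bypass_isPath _, ?_, rfl⟩
      intro x hx
      exact hg' x (Walk.support_bypass_subset _ hx)
    calc w.length = sInf L := hlen ▸ rfl
      _ ≤ w'.bypass.length := Nat.sInf_le this
      _ ≤ w'.length := Walk.length_bypass_le _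
  obtain ⟨wA, hpA, hgA, hminA⟩ := mingood A (exgood A hconnA hsA' htA')
  obtain ⟨wB, hpB, hgB, hminB⟩ := mingood B (exgood B hconnB hsB' htB')
  set kA := wA.length with hkA
  set kB := wB.length with hkB
  have hkA0 : kA ≠ 0 := fun h => hst (Walk.eq_of_length_eq_zero h)
  have hkB0 : kB ≠ 0 := fun h => hst (Walk.eq_of_length_eq_zero h)
  have hA_last : wA.getVert kA = t := wA.getVert_length
  have hB_last : wB.getVert kB = t := wB.getVert_length
  have hA_zero : wA.getVert 0 = s := wA.getVert_zero
  have hB_zero : wB.getVert 0 = s := wB.getVert_zero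
  have hkA1 : kA ≠ 1 := by
    intro h
    apply hadjst
    have := wA.adj_getVert_succ (i := 0) (by omega)
    rwa [hA_zero, show (0+1 : ℕ) = kA from h.symm, hA_last] at this
  have hkB1 : kB ≠ 1 := by
    intro h
    apply hadjst
    have := wB.adj_getVert_succ (i := 0) (by omega)
    rwa [hB_zero, show (0+1 : ℕ) = kB from h.symm, hB_last] at this
  have hkA2 : 2 ≤ kA := by omega
  have hkB2 : 2 ≤ kB := by omega
  -- interior vertices
  have intA : ∀ p, 1 ≤ p → p ≤ kA - 1 → wA.getVert p ∈ A := by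
    intro p hp1 hp2
    rcases hgA _ (getVert_mem_support' wA p) with h | h | h
    · exfalso
      have := IsPath.getVert_injOn' hpA p (by omega) 0 (by omega) (by rw [h, hA_zero])
      omega
    · exfalso
      have := IsPath.getVert_injOn' hpA p (by omega) kA (by omega) (by rw [h, hA_last])
      omega
    · exact h
  have intB : ∀ p, 1 ≤ p → p ≤ kB - 1 → wB.getVert p ∈ B := by
    intro p hp1 hp2
    rcases hgB _ (getVert_mem_support' wB p) with h | h | h
    · exfalso
      have := IsPath.getVert_injOn' hpB p (by omega) 0 (by omega) (by rw [h, hB_zero])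
      omega
    · exfalso
      have := IsPath.getVert_injOn' hpB p (by omega) kB (by omega) (by rw [h, hB_last])
      omega
    · exact h
  set n := kA + kB with hn
  have hn4 : 4 ≤ n := by omega
  haveI : NeZero n := ⟨by omega⟩
  set fv : ℕ → V := fun p => if p ≤ kA then wA.getVert p else wB.getVert (n - p) with hfv
  have fv_le : ∀ p, p ≤ kA → fv p = wA.getVert p := by intro p hp; simp [hfv, hp]
  have fv_gt : ∀ p, kA < p → fv p = wB.getVert (n - p) := by
    intro p hp; simp [hfv, Nat.not_le.mpr hp, hp.not_ge]
  have fv_inB : ∀ p, kA < p → p ≤ n - 1 → fv p ∈ B := by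
    intro p hp1 hp2
    rw [fv_gt p hp1]
    exact intB (n - p) (by omega) (by omega)
  -- injectivity on ℕ
  have claim_inj : ∀ p q, p < q → q < n → fv p = fv q → False := by
    intro p q hpq hq heq
    by_cases hqA : q ≤ kA
    · rw [fv_le p (by omega), fv_le q hqA] at heq
      have := IsPath.getVert_injOn' hpA p (by omega) q (by omega) heq
      omega
    · by_cases hpA' : p ≤ kA
      · -- p ≤ kA < q
        have hqB : fv q ∈ B := fv_inB q (by omega) (by omega)
        rcases Nat.lt_or_ge p 1 with hp0 | hp1
        · have : p = 0 := by omega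
          subst this
          rw [fv_le 0 (by omega), hA_zero] at heq
          exact hsB (heq ▸ hqB)
        · rcases Nat.lt_or_ge p kA with hpk | hpk
          · have hpA2 : fv p ∈ A := by
              rw [fv_le p (by omega)]
              exact intA p hp1 (by omega)
            exact (hdisj _ hpA2 _ hqB).1 heq
          · have : p = kA := by omega
            subst this
            rw [fv_le kA le_rfl, hA_last] at heq
            exact htB (heq ▸ hqB)
      · -- both > kA
        rw [fv_gt p (by omega), fv_gt q (by omega)] at heq
        have := IsPath.getVert_injOn' hpB (n - p) (by omega) (n - q) (by omega) heq
        omega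
  -- the cycle map
  set f : ZMod n → V := fun i => fv i.val with hf
  have hvlt : ∀ i : ZMod n, i.val < n := fun i => ZMod.val_lt i
  have hinj : Function.Injective f := by
    intro i j heq
    by_contra hne
    have hv : i.val ≠ j.val := fun h => hne (ZMod.val_injective n h)
    rcases Nat.lt_or_ge i.val j.val with h | h
    · exact claim_inj _ _ h (hvlt j) heq
    · exact claim_inj _ _ (by omega) (hvlt i) heq.symm
  have hval1 : (1 : ZMod n).val = 1 := ZMod.val_one'' (by omega)
  have hsucc : ∀ i : ZMod n, (i + 1).val = (i.val + 1) % n := by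
    intro i
    rw [ZMod.val_add, hval1]
  have claim_adj : ∀ p : ℕ, p < n → G.Adj (fv p) (fv ((p + 1) % n)) := by
    intro p hplt
    rcases Nat.lt_or_ge p kA with hpk | hpk
    · have h1 : (p + 1) % n = p + 1 := Nat.mod_eq_of_lt (by omega)
      rw [h1, fv_le p (by omega), fv_le (p+1) (by omega)]
      exact wA.adj_getVert_succ (by omega)
    · rcases Nat.eq_or_lt_of_le hpk with hpk' | hpk'
      · -- p = kA
        have hpeq : p = kA := hpk'.symm
        subst hpeq
        have h1 : (kA + 1) % n = kA + 1 := Nat.mod_eq_of_lt (by omega)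
        rw [h1, fv_le kA (by omega), fv_gt (kA+1) (by omega), hA_last]
        have h2 : n - (kA + 1) = kB - 1 := by omega
        rw [h2]
        have := wB.adj_getVert_succ (i := kB - 1) (by omega)
        rw [show kB - 1 + 1 = kB by omega, hB_last] at this
        exact this.symm
      · rcases Nat.lt_or_ge p (n-1) with hpn | hpn
        · have h1 : (p + 1) % n = p + 1 := Nat.mod_eq_of_lt (by omega)
          rw [h1, fv_gt p (by omega), fv_gt (p+1) (by omega)]
          have := wB.adj_getVert_succ (i := n - (p+1)) (by omega)
          rw [show n - (p+1) + 1 = n - p by omega] at this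
          exact this.symm
        · have hpeq : p = n - 1 := by omega
          subst hpeq
          have h1 : (n - 1 + 1) % n = 0 := by
            rw [show n - 1 + 1 = n by omega, Nat.mod_self]
          rw [h1, fv_gt (n-1) (by omega), fv_le 0 (by omega), hA_zero,
            show n - (n-1) = 1 by omega]
          have := (wB.adj_getVert_succ (i := 0) (by omega)).symm
          rwa [hB_zero] at this
  have hadjall : ∀ i : ZMod n, G.Adj (f i) (f (i + 1)) := by
    intro i
    have := claim_adj i.val (hvlt i)
    show G.Adj (fv i.val) (fv ((i + 1).val))
    rwa [hsucc i]
  obtain ⟨i, j, h1, h2, h3, hadj⟩ := hch n hn4 f hinj hadjall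
  -- derive contradiction
  have claim_chord : ∀ p q, p < q → q < n → q ≠ p + 1 → ¬(p = 0 ∧ q = n - 1) →
      G.Adj (fv p) (fv q) → False := by
    intro p q hpq hq hq1 hnw hadj'
    by_cases hqA : q ≤ kA
    · rw [fv_le p (by omega), fv_le q hqA] at hadj'
      obtain ⟨w', hl, hs⟩ := exists_shortcut wA p q (by omega) (by omega) hadj'
      have := hminA w' (fun x hx => hgA x (hs x hx))
      omega
    · by_cases hpA' : p ≤ kA
      · rcases Nat.lt_or_ge p 1 with hp0 | hp1
        · -- p = 0 : s adjacent to B-interior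
          have hp' : p = 0 := by omega
          subst hp'
          have hm2 : 2 ≤ n - q := by
            rcases Nat.eq_or_lt_of_le (show q ≤ n - 1 by omega) with h | h
            · exact absurd ⟨rfl, h⟩ hnw
            · omega
          rw [fv_le 0 (by omega), hA_zero, fv_gt q (by omega)] at hadj'
          have hadj'' : G.Adj (wB.getVert 0) (wB.getVert (n - q)) := by
            rw [hB_zero]; exact hadj'
          obtain ⟨w', hl, hs⟩ := exists_shortcut wB 0 (n - q) (by omega) (by omega) hadj''
          have := hminB w' (fun x hx => hgB x (hs x hx))
          omega
        · rcases Nat.lt_or_ge p kA with hpk | hpk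
          · -- p interior of A, q interior of B
            have hpA2 : fv p ∈ A := by
              rw [fv_le p (by omega)]; exact intA p hp1 (by omega)
            have hqB : fv q ∈ B := fv_inB q (by omega) (by omega)
            exact (hdisj _ hpA2 _ hqB).2 hadj'
          · -- p = kA : t adjacent to B-interior
            have hp' : p = kA := by omega
            subst hp'
            have hm : n - q ≤ kB - 2 := by omega
            rw [fv_le kA le_rfl, hA_last, fv_gt q (by omega)] at hadj'
            have hadj'' : G.Adj (wB.getVert (n - q)) (wB.getVert kB) := by
              rw [hB_last]; exact hadj'.symm
            obtain ⟨w', hl, hs⟩ := exists_shortcut wB (n - q) kB (by omega) (by omega)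
              hadj''
            have := hminB w' (fun x hx => hgB x (hs x hx))
            omega
      · -- both in B side
        rw [fv_gt p (by omega), fv_gt q (by omega)] at hadj'
        obtain ⟨w', hl, hs⟩ := exists_shortcut wB (n - q) (n - p) (by omega) (by omega)
          hadj'.symm
        have := hminB w' (fun x hx => hgB x (hs x hx))
        omega
  have hvne : i.val ≠ j.val := fun h => h1 (ZMod.val_injective n h)
  rcases Nat.lt_or_ge i.val j.val with hlt | hge
  · refine claim_chord i.val j.val hlt (hvlt j) ?_ ?_ hadj
    · intro h
      apply h2
      apply ZMod.val_injective
      rw [hsucc i, h, Nat.mod_eq_of_lt (by have := hvlt j; omega)]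
    · rintro ⟨hi0, hjn⟩
      apply h3
      apply ZMod.val_injective
      rw [hsucc j, hjn, show n - 1 + 1 = n by omega, Nat.mod_self, hi0]
  · refine claim_chord j.val i.val (by omega) (hvlt i) ?_ ?_ hadj.symm
    · intro h
      apply h3
      apply ZMod.val_injective
      rw [hsucc j, h, Nat.mod_eq_of_lt (by have := hvlt i; omega)]
    · rintro ⟨hj0, hin⟩
      apply h2
      apply ZMod.val_injective
      rw [hsucc i, hin, show n - 1 + 1 = n by omega, Nat.mod_self, hj0]

section Dirac

open scoped Classical

variable [DecidableEq V]

/-- Restriction of `G` to a finset of vertices (keeping all of `V` as vertex type). -/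
def Gr (G : SimpleGraph V) (U : Finset V) : SimpleGraph V where
  Adj x y := G.Adj x y ∧ x ∈ U ∧ y ∈ U
  symm := ⟨by rintro x y ⟨h, hx, hy⟩; exact ⟨h.symm, hy, hx⟩⟩
  loopless := ⟨by rintro x ⟨h, _, _⟩; exact G.irrefl h⟩

lemma gr_adj {U : Finset V} {x y : V} :
    (Gr G U).Adj x y ↔ G.Adj x y ∧ x ∈ U ∧ y ∈ U := Iff.rfl

lemma gr_le {U : Finset V} : Gr G U ≤ G := fun _ _ h => h.1

lemma gr_support {U : Finset V} {u v : V} (w : (Gr G U).Walk u v) (hu : u ∈ U) :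
    ∀ x ∈ w.support, x ∈ U := by
  induction w with
  | nil => intro x hx; simp only [support_nil, List.mem_singleton] at hx; rwa [hx]
  | cons h p ih =>
    intro x hx
    simp only [support_cons, List.mem_cons] at hx
    rcases hx with rfl | hx
    · exact hu
    · exact ih h.2.2 x hx

lemma walk_reach {H : SimpleGraph V} {u v : V} (w : H.Walk u v) :
    ∀ x ∈ w.support, H.Reachable u x := by
  induction w with
  | nil => intro x hx; simp only [support_nil, List.mem_singleton] at hx; exact hx ▸ ⟨.nil⟩
  | @cons u u' v h p ih =>
    intro x hx
    simp only [support_cons, List.mem_cons] at hx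
    rcases hx with rfl | hx
    · exact ⟨.nil⟩
    · exact (h.reachable).trans (ih x hx)

/-- A walk in `Gr G U` transfers to a `G`-walk with the same support. -/
lemma gr_to_G_walk {U : Finset V} {u v : V} (w : (Gr G U).Walk u v) :
    ∃ w' : G.Walk u v, w'.support = w.support :=
  ⟨w.transfer G (fun e he => (SimpleGraph.edgeSet_mono gr_le) (w.edges_subset_edgeSet he)),
    support_transfer _ _⟩

/-- Connectivity of reachability-components, as `G`-walks. -/
lemma comp_conn {U : Finset V} {a : V} :
    ∀ u ∈ (U.filter (fun x => (Gr G U).Reachable a x)),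
    ∀ u' ∈ (U.filter (fun x => (Gr G U).Reachable a x)),
    ∃ w : G.Walk u u', ∀ x ∈ w.support,
      x ∈ (U.filter (fun x => (Gr G U).Reachable a x)) := by
  classical
  intro u hu u' hu'
  simp only [Finset.mem_filter] at hu hu'
  obtain ⟨w⟩ := hu.2.symm.trans hu'.2
  obtain ⟨w', hw'⟩ := gr_to_G_walk w
  refine ⟨w', ?_⟩
  intro x hx
  rw [hw'] at hx
  simp only [Finset.mem_filter]
  exact ⟨gr_support w hu.1 x hx, hu.2.trans (walk_reach w x hx)⟩

/-- Every vertex of a minimal separator has a neighbour in the component of `a`. -/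
lemma sep_neighbor {W S : Finset V} {a b : V}
    (hSsub : S ⊆ W \ {a, b})
    (hsep : ¬ (Gr G (W \ S)).Reachable a b)
    (hmin : ∀ S' ⊆ W \ {a, b}, ¬ (Gr G (W \ S')).Reachable a b → S.card ≤ S'.card)
    {s : V} (hs : s ∈ S) :
    ∃ u, u ∈ W \ S ∧ (Gr G (W \ S)).Reachable a u ∧ G.Adj s u := by
  classical
  have hsa : s ≠ a := by
    have := hSsub hs
    simp only [Finset.mem_sdiff, Finset.mem_insert, Finset.mem_singleton] at this
    tauto
  -- removing s from S destroys the separator property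
  have hre : (Gr G (W \ S.erase s)).Reachable a b := by
    by_contra hre
    have := hmin (S.erase s) ((Finset.erase_subset _ _).trans hSsub) hre
    have hcard := Finset.card_erase_of_mem hs
    have hpos : 0 < S.card := Finset.card_pos.mpr ⟨s, hs⟩
    omega
  obtain ⟨w⟩ := hre
  -- the walk must pass through s
  have hsup : s ∈ w.support := by
    by_contra hsup
    apply hsep
    have hT : ∀ e ∈ w.edges, e ∈ (Gr G (W \ S)).edgeSet := by
      intro e he
      induction e with
      | h x y =>
        have hadj : (Gr G (W \ S.erase s)).Adj x y := w.adj_of_mem_edges he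
        have hx : x ∈ w.support := w.fst_mem_support_of_mem_edges he
        have hy : y ∈ w.support := w.snd_mem_support_of_mem_edges he
        have hx' : x ∈ W \ S := by
          have := hadj.2.1
          simp only [Finset.mem_sdiff, Finset.mem_erase] at this ⊢
          exact ⟨this.1, fun h => this.2 ⟨fun heq => hsup (heq ▸ hx), h⟩⟩
        have hy' : y ∈ W \ S := by
          have := hadj.2.2
          simp only [Finset.mem_sdiff, Finset.mem_erase] at this ⊢
          exact ⟨this.1, fun h => this.2 ⟨fun heq => hsup (heq ▸ hy), h⟩⟩
        exact ⟨hadj.1, hx', hy'⟩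
    exact ⟨w.transfer _ hT⟩
  -- take the walk up to the first visit of s, and reverse
  set wtu := w.takeUntil s hsup with hwtu
  have hcount : wtu.support.count s = 1 := w.count_support_takeUntil_eq_one hsup
  set rev := wtu.reverse with hrev
  have hnil : ¬ rev.Nil := by
    intro h
    exact hsa (eq_of_length_eq_zero (nil_iff_length_eq.mp h))
  set u := rev.getVert 1 with hu
  have hadj_su : (Gr G (W \ S.erase s)).Adj s u := Walk.adj_snd (p := rev) hnil
  have htail := rev.tail
  have hsupp_eq : s :: rev.tail.support = rev.support := rev.cons_support_tail hnil
  have hcount' : rev.support.count s = 1 := by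
    rw [hrev, Walk.support_reverse, List.count_reverse]
    exact hcount
  have hsnotin : s ∉ rev.tail.support := by
    rw [← hsupp_eq] at hcount'
    simp only [List.count_cons_self] at hcount'
    exact List.count_eq_zero.mp (by omega)
  -- transfer the tail to Gr G (W \ S)
  have hT : ∀ e ∈ rev.tail.edges, e ∈ (Gr G (W \ S)).edgeSet := by
    intro e he
    induction e with
    | h x y =>
      have hadj : (Gr G (W \ S.erase s)).Adj x y := rev.tail.adj_of_mem_edges he
      have hx : x ∈ rev.tail.support := rev.tail.fst_mem_support_of_mem_edges he
      have hy : y ∈ rev.tail.support := rev.tail.snd_mem_support_of_mem_edges he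
      have hx' : x ∈ W \ S := by
        have := hadj.2.1
        simp only [Finset.mem_sdiff, Finset.mem_erase] at this ⊢
        exact ⟨this.1, fun h => this.2 ⟨fun heq => hsnotin (heq ▸ hx), h⟩⟩
      have hy' : y ∈ W \ S := by
        have := hadj.2.2
        simp only [Finset.mem_sdiff, Finset.mem_erase] at this ⊢
        exact ⟨this.1, fun h => this.2 ⟨fun heq => hsnotin (heq ▸ hy), h⟩⟩
      exact ⟨hadj.1, hx', hy'⟩
  have hureach : (Gr G (W \ S)).Reachable a u := by
    have wua : (Gr G (W \ S)).Walk u a := rev.tail.transfer _ hT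
    exact wua.reverse.reachable
  have humem : u ∈ W \ S := by
    have := hadj_su.2.2
    have hune : u ≠ s := hadj_su.ne'
    simp only [Finset.mem_sdiff, Finset.mem_erase] at this ⊢
    exact ⟨this.1, fun h => this.2 ⟨hune, h⟩⟩
  exact ⟨u, humem, hureach, hadj_su.1⟩

def SimplicialIn (G : SimpleGraph V) (W : Finset V) (x : V) : Prop :=
  x ∈ W ∧ ∀ y ∈ W, ∀ z ∈ W, G.Adj x y → G.Adj x z → y ≠ z → G.Adj y z

theorem dirac_aux_s2 (hch : IsChordal G) :
    ∀ (n : ℕ) (W : Finset V), W.card ≤ n → W.Nonempty →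
    (∀ x ∈ W, ∀ y ∈ W, x ≠ y → G.Adj x y) ∨
    ∃ x ∈ W, ∃ y ∈ W, x ≠ y ∧ ¬ G.Adj x y ∧ SimplicialIn G W x ∧ SimplicialIn G W y := by
  classical
  intro n
  induction n with
  | zero =>
    intro W hW hne
    exact absurd (Finset.card_pos.mpr hne) (by omega)
  | succ n ih =>
    intro W hWcard hWne
    by_cases hclq : ∀ x ∈ W, ∀ y ∈ W, x ≠ y → G.Adj x y
    · exact Or.inl hclq
    right
    push_neg at hclq
    obtain ⟨a, ha, b, hb, hab, hnadj⟩ := hclq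
    -- separators
    set sepF := ((W \ {a, b}).powerset).filter
      (fun S => ¬ (Gr G (W \ S)).Reachable a b) with hsepF
    have hsepne : (W \ {a, b}) ∈ sepF := by
      simp only [hsepF, Finset.mem_filter, Finset.mem_powerset]
      refine ⟨le_refl _, ?_⟩
      rintro ⟨w⟩
      have hnil : ¬ w.Nil := by
        intro h
        exact hab (eq_of_length_eq_zero (nil_iff_length_eq.mp h))
      have hadj : (Gr G (W \ (W \ {a, b}))).Adj a (w.getVert 1) := Walk.adj_snd (p := w) hnil
      have hu : w.getVert 1 ∈ W \ (W \ {a, b}) := hadj.2.2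
      have : w.getVert 1 ∈ ({a, b} : Finset V) := by
        simp only [Finset.mem_sdiff] at hu
        rcases hu with ⟨h1, h2⟩
        by_contra h3
        exact h2 ⟨h1, h3⟩
      simp only [Finset.mem_insert, Finset.mem_singleton] at this
      rcases this with h | h
      · rw [h] at hadj; exact G.irrefl hadj.1
      · rw [h] at hadj; exact hnadj hadj.1
    obtain ⟨S, hSmem, hSmin⟩ := Finset.exists_min_image sepF Finset.card ⟨_, hsepne⟩
    simp only [hsepF, Finset.mem_filter, Finset.mem_powerset] at hSmem
    obtain ⟨hSsub, hsep⟩ := hSmem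
    have hmin : ∀ S' ⊆ W \ {a, b}, ¬ (Gr G (W \ S')).Reachable a b → S.card ≤ S'.card := by
      intro S' h1 h2
      exact hSmin S' (by simp only [hsepF, Finset.mem_filter, Finset.mem_powerset]; exact ⟨h1, h2⟩)
    have hSW : S ⊆ W := hSsub.trans (Finset.sdiff_subset)
    have haS : a ∉ S := by
      intro h
      have := hSsub h
      simp only [Finset.mem_sdiff, Finset.mem_insert, Finset.mem_singleton] at this
      tauto
    have hbS : b ∉ S := by
      intro h
      have := hSsub h
      simp only [Finset.mem_sdiff, Finset.mem_insert, Finset.mem_singleton] at this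
      tauto
    set H := Gr G (W \ S) with hH
    set A := ((W \ S).filter (fun x => H.Reachable a x)) with hA
    set B := ((W \ S).filter (fun x => H.Reachable b x)) with hB
    have haA : a ∈ A := by
      simp only [hA, Finset.mem_filter, Finset.mem_sdiff]
      exact ⟨⟨ha, haS⟩, Reachable.refl a⟩
    have hbB : b ∈ B := by
      simp only [hB, Finset.mem_filter, Finset.mem_sdiff]
      exact ⟨⟨hb, hbS⟩, Reachable.refl b⟩
    have hdisjAB : ∀ x ∈ A, ∀ y ∈ B, x ≠ y ∧ ¬ G.Adj x y := by
      intro x hx y hy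
      simp only [hA, hB, Finset.mem_filter] at hx hy
      constructor
      · rintro rfl
        exact hsep (hx.2.trans hy.2.symm)
      · intro hadj
        exact hsep ((hx.2.trans ⟨.cons ⟨hadj, hx.1, hy.1⟩ .nil⟩).trans hy.2.symm)
    -- S is a clique
    have hSclique : ∀ s ∈ S, ∀ t ∈ S, s ≠ t → G.Adj s t := by
      intro s hs t ht hst
      have hsA : s ∉ A := fun h => by
        simp only [hA, Finset.mem_filter, Finset.mem_sdiff] at h; exact h.1.2 hs
      have htA : t ∉ A := fun h => by
        simp only [hA, Finset.mem_filter, Finset.mem_sdiff] at h; exact h.1.2 ht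
      have hsB : s ∉ B := fun h => by
        simp only [hB, Finset.mem_filter, Finset.mem_sdiff] at h; exact h.1.2 hs
      have htB : t ∉ B := fun h => by
        simp only [hB, Finset.mem_filter, Finset.mem_sdiff] at h; exact h.1.2 ht
      have hminb : ∀ S' ⊆ W \ {b, a}, ¬ (Gr G (W \ S')).Reachable b a → S.card ≤ S'.card := by
        intro S' h1 h2
        exact hmin S' (by rwa [Finset.pair_comm]) (fun r => h2 r.symm)
      have hnA := sep_neighbor hSsub hsep hmin (s := s) hs
      have hnA' := sep_neighbor hSsub hsep hmin (s := t) ht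
      have hnB := sep_neighbor (by rwa [Finset.pair_comm]) (fun r => hsep r.symm) hminb
        (s := s) hs
      have hnB' := sep_neighbor (by rwa [Finset.pair_comm]) (fun r => hsep r.symm) hminb
        (s := t) ht
      refine adj_of_separator hch A B s t hst comp_conn comp_conn hsA htA hsB htB hdisjAB
        ?_ ?_ ?_ ?_
      · obtain ⟨u, h1, h2, h3⟩ := hnA
        exact ⟨u, by simp only [hA, Finset.mem_filter]; exact ⟨h1, h2⟩, h3⟩
      · obtain ⟨u, h1, h2, h3⟩ := hnA'
        exact ⟨u, by simp only [hA, Finset.mem_filter]; exact ⟨h1, h2⟩, h3⟩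
      · obtain ⟨u, h1, h2, h3⟩ := hnB
        exact ⟨u, by simp only [hB, Finset.mem_filter]; exact ⟨h1, h2⟩, h3⟩
      · obtain ⟨u, h1, h2, h3⟩ := hnB'
        exact ⟨u, by simp only [hB, Finset.mem_filter]; exact ⟨h1, h2⟩, h3⟩
    -- a simplicial vertex in the component of c, for c ∉ S not reaching z
    have side : ∀ c z : V, c ∈ W → c ∉ S → z ∈ W → z ∉ S → ¬ H.Reachable c z →
        ∃ x, x ∈ ((W \ S).filter (fun u => H.Reachable c u)) ∧ SimplicialIn G W x := by
      intro c z hcW hcS hzW hzS hcz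
      set Ac := ((W \ S).filter (fun u => H.Reachable c u)) with hAc
      have hcAc : c ∈ Ac := by
        simp only [hAc, Finset.mem_filter, Finset.mem_sdiff]
        exact ⟨⟨hcW, hcS⟩, Reachable.refl c⟩
      set W' := Ac ∪ S with hW'
      have hW'sub : W' ⊆ W := by
        intro x hx
        simp only [hW', Finset.mem_union] at hx
        rcases hx with hx | hx
        · simp only [hAc, Finset.mem_filter, Finset.mem_sdiff] at hx
          exact hx.1.1
        · exact hSW hx
      have hzW' : z ∉ W' := by
        simp only [hW', Finset.mem_union, hAc, Finset.mem_filter]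
        rintro (⟨_, h⟩ | h)
        · exact hcz h
        · exact hzS h
      have hW'card : W'.card ≤ n := by
        have : W' ⊂ W := ⟨hW'sub, fun h => hzW' (h hzW)⟩
        have := Finset.card_lt_card this
        omega
      have hclose : ∀ x ∈ Ac, ∀ y ∈ W, G.Adj x y → y ∈ W' := by
        intro x hx y hy hadj
        by_cases hyS : y ∈ S
        · exact Finset.mem_union_right _ hyS
        · refine Finset.mem_union_left _ ?_
          simp only [hAc, Finset.mem_filter, Finset.mem_sdiff] at hx ⊢
          refine ⟨⟨hy, hyS⟩, hx.2.trans ?_⟩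
          exact Adj.reachable ⟨hadj, Finset.mem_sdiff.mpr hx.1, Finset.mem_sdiff.mpr ⟨hy, hyS⟩⟩
      rcases ih W' hW'card ⟨c, Finset.mem_union_left _ hcAc⟩ with hcomp | htwo
      · refine ⟨c, hcAc, hW'sub (Finset.mem_union_left _ hcAc), ?_⟩
        intro y hy zz hzz hady hadz hyz
        exact hcomp y (hclose c hcAc y hy hady) zz (hclose c hcAc zz hzz hadz) hyz
      · obtain ⟨x1, hx1, x2, hx2, hx12, hnadj12, hs1, hs2⟩ := htwo
        have hnotboth : x1 ∉ S ∨ x2 ∉ S := by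
          by_contra h
          push_neg at h
          exact hnadj12 (hSclique x1 h.1 x2 h.2 hx12)
        have key : ∀ x, x ∈ W' → x ∉ S → SimplicialIn G W' x → ∃ x', x' ∈ Ac ∧ SimplicialIn G W x' := by
          intro x hxW' hxS hsimp
          have hxAc : x ∈ Ac := by
            rcases Finset.mem_union.mp hxW' with h | h
            · exact h
            · exact absurd h hxS
          refine ⟨x, hxAc, hW'sub hxW', ?_⟩
          intro y hy zz hzz hady hadz hyz
          exact hsimp.2 y (hclose x hxAc y hy hady) zz (hclose x hxAc zz hzz hadz) hady hadz hyz
        rcases hnotboth with h | h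
        · exact key x1 hx1 h hs1
        · exact key x2 hx2 h hs2
    obtain ⟨xA, hxA, hsimpA⟩ := side a b ha haS hb hbS hsep
    obtain ⟨xB, hxB, hsimpB⟩ := side b a hb hbS ha haS (fun r => hsep r.symm)
    have hAB := hdisjAB xA (by rw [hA]; exact hxA) xB (by rw [hB]; exact hxB)
    exact ⟨xA, hsimpA.1, xB, hsimpB.1, hAB.1, hAB.2, hsimpA, hsimpB⟩

/-- Every nonempty chordal graph has a simplicial vertex. -/
theorem exists_simplicial [Fintype V] [Nonempty V] (hch : IsChordal G) :
    ∃ v : V, ∀ y z, G.Adj v y → G.Adj v z → y ≠ z → G.Adj y z := by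
  classical
  rcases dirac_aux_s2 hch (Fintype.card V) Finset.univ (by rw [Finset.card_univ]) 
    Finset.univ_nonempty with hcomp | ⟨x, _, _, _, _, _, hsx, _⟩
  · obtain ⟨v⟩ := ‹Nonempty V›
    exact ⟨v, fun y z h1 h2 hyz => hcomp y (Finset.mem_univ y) z (Finset.mem_univ z) hyz⟩
  · exact ⟨x, fun y z h1 h2 hyz =>
      hsx.2 y (Finset.mem_univ y) z (Finset.mem_univ z) h1 h2 hyz⟩

end Dirac

end ChordalAux


namespace ChordalAux2

open SimpleGraph Polynomial Finset
open scoped Classical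

variable {V : Type} [Fintype V] [DecidableEq V] {G : SimpleGraph V}

lemma cliqueCount_eq_card (G : SimpleGraph V) (i : ℕ) :
    cliqueCount G i = (Finset.univ.filter (fun s : Finset V => G.IsNClique i s)).card := by
  rw [cliqueCount, Set.ncard_eq_toFinset_card']
  congr 1
  ext s
  simp [Set.mem_toFinset]

lemma cliqueCount_eq_zero (G : SimpleGraph V) {i : ℕ} (h : Fintype.card V < i) :
    cliqueCount G i = 0 := by
  rw [cliqueCount]
  rw [Set.ncard_eq_zero (Set.toFinite _)]
  ext s
  simp only [Set.mem_setOf_eq, Set.mem_empty_iff_false, iff_false]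
  intro hs
  have := hs.card_eq ▸ Finset.card_le_univ s
  omega

lemma exists_maxclique_superset (G : SimpleGraph V) :
    ∀ (k : ℕ) (t : Finset V), Fintype.card V - t.card ≤ k → G.IsClique (↑t : Set V) →
    ∃ u : Finset V, IsMaxCliqueOf G u ∧ t ⊆ u := by
  intro k
  induction k with
  | zero =>
    intro t hk hcl
    by_cases hmax : ∀ u : Finset V, G.IsClique (↑u : Set V) → t ⊆ u → t = u
    · exact ⟨t, ⟨hcl, hmax⟩, Finset.Subset.refl t⟩
    · exfalso
      push_neg at hmax
      obtain ⟨u, hucl, htu, hne⟩ := hmax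
      have h1 : t.card < u.card := Finset.card_lt_card (ssubset_of_subset_of_ne htu hne)
      have h2 : u.card ≤ Fintype.card V := by
        rw [← Finset.card_univ]; exact Finset.card_le_univ u
      omega
  | succ k ih =>
    intro t hk hcl
    by_cases hmax : ∀ u : Finset V, G.IsClique (↑u : Set V) → t ⊆ u → t = u
    · exact ⟨t, ⟨hcl, hmax⟩, Finset.Subset.refl t⟩
    · push_neg at hmax
      obtain ⟨u, hucl, htu, hne⟩ := hmax
      have h1 : t.card < u.card := Finset.card_lt_card (ssubset_of_subset_of_ne htu hne)
      obtain ⟨w, hw, huw⟩ := ih u (by omega) hucl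
      exact ⟨w, hw, htu.trans huw⟩

lemma IsNClique.subset_clique {t : Finset V} {i : ℕ} (ht : IsMaxCliqueOf G t)
    (hi : i ≤ t.card) : ∃ s : Finset V, G.IsNClique i s ∧ s ⊆ t := by
  obtain ⟨s, hst, hcard⟩ := Finset.exists_subset_card_eq hi
  exact ⟨s, ⟨ht.1.subset (by exact_mod_cast hst), hcard⟩, hst⟩

lemma dom_set_nonempty (G : SimpleGraph V) (i : ℕ) :
    {k | ∃ D : Finset (Finset V), IsDominatingCliqueSet G i D ∧ D.card = k}.Nonempty := by
  refine ⟨_, Finset.univ.filter (fun s : Finset V => G.IsNClique i s), ⟨?_, ?_⟩, rfl⟩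
  · intro s hs
    simpa using (Finset.mem_filter.mp hs).2
  · intro t htmax hit
    obtain ⟨s, hs, hst⟩ := IsNClique.subset_clique htmax hit
    exact ⟨s, by simp [hs], hst⟩

lemma exists_min_dom (G : SimpleGraph V) (i : ℕ) :
    ∃ D : Finset (Finset V), IsDominatingCliqueSet G i D ∧ D.card = domNum G i :=
  Nat.sInf_mem (dom_set_nonempty G i)

lemma domNum_le {i : ℕ} {D : Finset (Finset V)} (hD : IsDominatingCliqueSet G i D) :
    domNum G i ≤ D.card :=
  Nat.sInf_le ⟨D, hD, rfl⟩

section Simplicial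

variable (G) (v : V)

/-- Neighbours of `v` as a finset. -/
noncomputable def nbrF : Finset V := Finset.univ.filter (fun u => G.Adj v u)

variable {G v}

lemma mem_nbrF {u : V} : u ∈ nbrF G v ↔ G.Adj v u := by simp [nbrF]

lemma v_not_mem_nbrF : v ∉ nbrF G v := by simp [nbrF]

variable (hsimp : ∀ y z : V, G.Adj v y → G.Adj v z → y ≠ z → G.Adj y z)
include hsimp

lemma nbrF_clique : G.IsClique (↑(nbrF G v) : Set V) := by
  intro x hx y hy hxy
  exact hsimp x y (mem_nbrF.mp hx) (mem_nbrF.mp hy) hxy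

lemma Qclique : G.IsClique (↑(insert v (nbrF G v)) : Set V) := by
  rw [Finset.coe_insert]
  refine (nbrF_clique hsimp).insert ?_
  intro b hb _
  exact mem_nbrF.mp hb

lemma subset_Q {s : Finset V} (hs : G.IsClique (↑s : Set V)) (hv : v ∈ s) :
    s ⊆ insert v (nbrF G v) := by
  intro x hx
  by_cases hxv : x = v
  · rw [hxv]; exact Finset.mem_insert_self v _
  · exact Finset.mem_insert_of_mem (mem_nbrF.mpr (hs hv hx (Ne.symm hxv)))

lemma Qmax : IsMaxCliqueOf G (insert v (nbrF G v)) := by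
  refine ⟨Qclique hsimp, ?_⟩
  intro t ht hsub
  exact Finset.Subset.antisymm hsub (subset_Q hsimp ht (hsub (Finset.mem_insert_self v _)))

lemma maxclique_of_mem_v {t : Finset V} (ht : IsMaxCliqueOf G t) (hv : v ∈ t) :
    t = insert v (nbrF G v) :=
  ht.2 _ (Qclique hsimp) (subset_Q hsimp ht.1 hv)

end Simplicial

section Subtype

variable (v : V)

@[reducible] def Vm := {u : V // u ≠ v}

variable {v}

noncomputable def emb : Vm v ↪ V := Function.Embedding.subtype _

noncomputable def liftF (s : Finset V) : Finset (Vm v) := s.subtype _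

lemma ne_v_of_mem_map {t : Finset (Vm v)} {x : V} (h : x ∈ t.map (emb (v := v))) :
    x ≠ v := by
  simp only [Finset.mem_map, emb, Function.Embedding.coe_subtype] at h
  obtain ⟨⟨a, ha⟩, _, rfl⟩ := h
  exact ha

lemma v_not_mem_map {t : Finset (Vm v)} : v ∉ t.map (emb (v := v)) :=
  fun h => (ne_v_of_mem_map h) rfl

lemma map_liftF {s : Finset V} (hv : v ∉ s) : (liftF (v := v) s).map emb = s := by
  rw [liftF, emb, Finset.subtype_map]
  exact Finset.filter_true_of_mem (fun x hx => fun h => hv (h ▸ hx))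

lemma liftF_map {t : Finset (Vm v)} : liftF (v := v) (t.map emb) = t := by
  ext ⟨x, hx⟩
  simp only [liftF, Finset.mem_subtype]
  exact Finset.mem_map' (emb (v := v)) (a := ⟨x, hx⟩)

lemma liftF_mono {s u : Finset V} (h : s ⊆ u) : liftF (v := v) s ⊆ liftF u :=
  Finset.subtype_mono h

lemma liftF_inj {s u : Finset V} (hs : v ∉ s) (hu : v ∉ u)
    (h : liftF (v := v) s = liftF u) : s = u := by
  rw [← map_liftF hs, ← map_liftF hu, h]

lemma clique_map_iff {t : Finset (Vm v)} :
    (G.comap (Subtype.val : Vm v → V)).IsClique (↑t : Set (Vm v)) ↔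
      G.IsClique (↑(t.map (emb (v := v))) : Set V) := by
  constructor
  · intro h x hx y hy hxy
    simp only [Finset.coe_map, Set.mem_image, Finset.mem_coe] at hx hy
    obtain ⟨a, ha, rfl⟩ := hx
    obtain ⟨b, hb, rfl⟩ := hy
    have hab : a ≠ b := fun hab => hxy (by rw [hab])
    exact h ha hb hab
  · intro h x hx y hy hxy
    have hx' : (emb x : V) ∈ (t.map (emb (v := v)) : Finset V) :=
      Finset.mem_map_of_mem _ hx
    have hy' : (emb y : V) ∈ (t.map (emb (v := v)) : Finset V) :=
      Finset.mem_map_of_mem _ hy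
    have : (emb x : V) ≠ emb y := fun he => hxy (emb.injective he)
    exact h hx' hy' this

lemma nclique_map_iff {t : Finset (Vm v)} {i : ℕ} :
    (G.comap (Subtype.val : Vm v → V)).IsNClique i t ↔
      G.IsNClique i (t.map (emb (v := v))) := by
  rw [isNClique_iff, isNClique_iff, clique_map_iff, Finset.card_map]

end Subtype

section MaxCliques

variable {v : V} (hsimp : ∀ y z : V, G.Adj v y → G.Adj v z → y ≠ z → G.Adj y z)
include hsimp

/-- Dichotomy for maximal cliques of the deleted graph. -/
lemma maxclique_dichotomy {t' : Finset (Vm v)}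
    (ht' : IsMaxCliqueOf (G.comap (Subtype.val : Vm v → V)) t') :
    IsMaxCliqueOf G (t'.map (emb (v := v))) ∨ t'.map (emb (v := v)) = nbrF G v := by
  set T := t'.map (emb (v := v)) with hT
  have hTcl : G.IsClique (↑T : Set V) := clique_map_iff.mp ht'.1
  obtain ⟨u, humax, hTu⟩ := exists_maxclique_superset G (Fintype.card V - T.card) T le_rfl hTcl
  by_cases hvu : v ∈ u
  · right
    have huQ : u = insert v (nbrF G v) := maxclique_of_mem_v hsimp humax hvu
    have hTnbr : T ⊆ nbrF G v := by
      intro x hx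
      have hxu : x ∈ u := hTu hx
      rw [huQ] at hxu
      rcases Finset.mem_insert.mp hxu with rfl | h
      · exact absurd hx v_not_mem_map
      · exact h
    have hnbr' : (G.comap (Subtype.val : Vm v → V)).IsClique
        (↑(liftF (v := v) (nbrF G v)) : Set (Vm v)) := by
      rw [clique_map_iff, map_liftF v_not_mem_nbrF]
      exact nbrF_clique hsimp
    have hsub : t' ⊆ liftF (nbrF G v) := by
      have := liftF_mono (v := v) hTnbr
      rwa [hT, liftF_map] at this
    have := ht'.2 _ hnbr' hsub
    rw [hT, this, map_liftF v_not_mem_nbrF]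
  · left
    have hucl' : (G.comap (Subtype.val : Vm v → V)).IsClique
        (↑(liftF (v := v) u) : Set (Vm v)) := by
      rw [clique_map_iff, map_liftF hvu]
      exact humax.1
    have hsub : t' ⊆ liftF u := by
      have := liftF_mono (v := v) hTu
      rwa [hT, liftF_map] at this
    have heq := ht'.2 _ hucl' hsub
    rw [hT, heq, map_liftF hvu]
    exact humax

/-- Clique count relation upon deleting a simplicial vertex. -/
lemma cliqueCount_rel (i : ℕ) (hi : 1 ≤ i) :
    cliqueCount G i =
      cliqueCount (G.comap (Subtype.val : Vm v → V)) i + (nbrF G v).card.choose (i - 1) := by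
  rw [cliqueCount_eq_card G i]
  set F := Finset.univ.filter (fun s : Finset V => G.IsNClique i s) with hF
  have hsplit := Finset.card_filter_add_card_filter_not
    (s := F) (p := fun s : Finset V => v ∈ s)
  -- part without v
  have hA : (F.filter (fun s : Finset V => ¬ v ∈ s)).card =
      cliqueCount (G.comap (Subtype.val : Vm v → V)) i := by
    rw [cliqueCount_eq_card]
    refine Finset.card_bij' (fun s _ => liftF (v := v) s)
      (fun t _ => t.map (emb (v := v))) ?_ ?_ ?_ ?_
    · intro s hs
      simp only [hF, Finset.mem_filter, Finset.mem_univ, true_and] at hs ⊢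
      rw [nclique_map_iff, map_liftF hs.2]
      exact hs.1
    · intro t ht
      simp only [hF, Finset.mem_filter, Finset.mem_univ, true_and] at ht ⊢
      exact ⟨nclique_map_iff.mp ht, v_not_mem_map⟩
    · intro s hs
      simp only [hF, Finset.mem_filter] at hs
      exact map_liftF hs.2
    · intro t _
      exact liftF_map
  -- part with v
  have hB : (F.filter (fun s => v ∈ s)).card =
      ((nbrF G v).powersetCard (i - 1)).card := by
    refine Finset.card_bij' (fun s _ => s.erase v) (fun T _ => insert v T) ?_ ?_ ?_ ?_
    · intro s hs
      simp only [hF, Finset.mem_filter, Finset.mem_univ, true_and] at hs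
      rw [Finset.mem_powersetCard]
      constructor
      · intro x hx
        rw [Finset.mem_erase] at hx
        exact mem_nbrF.mpr (hs.1.1 hs.2 hx.2 (Ne.symm hx.1))
      · rw [Finset.card_erase_of_mem hs.2, hs.1.card_eq]
    · intro T hT
      rw [Finset.mem_powersetCard] at hT
      have hvT : v ∉ T := fun h => v_not_mem_nbrF (hT.1 h)
      simp only [hF, Finset.mem_filter, Finset.mem_univ, true_and]
      refine ⟨⟨?_, ?_⟩, Finset.mem_insert_self v T⟩
      · rw [Finset.coe_insert]
        refine ((nbrF_clique hsimp).subset (by exact_mod_cast hT.1)).insert ?_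
        intro b hb _
        exact mem_nbrF.mp (hT.1 hb)
      · rw [Finset.card_insert_of_notMem hvT, hT.2]
        omega
    · intro s hs
      simp only [hF, Finset.mem_filter] at hs
      exact Finset.insert_erase hs.2
    · intro T hT
      rw [Finset.mem_powersetCard] at hT
      exact Finset.erase_insert (fun h => v_not_mem_nbrF (hT.1 h))
  rw [Finset.card_powersetCard] at hB
  omega

end MaxCliques

section DomNumRel

variable {v : V} (hsimp : ∀ y z : V, G.Adj v y → G.Adj v z → y ≠ z → G.Adj y z)
include hsimp

lemma Qcard : (insert v (nbrF G v)).card = (nbrF G v).card + 1 :=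
  Finset.card_insert_of_notMem v_not_mem_nbrF

lemma mem_D_eq_Q {i : ℕ} {s : Finset V} (hs : G.IsNClique i s) (hvs : v ∈ s)
    (hicard : i = (nbrF G v).card + 1) : s = insert v (nbrF G v) := by
  have hsub : s ⊆ insert v (nbrF G v) := subset_Q hsimp hs.1 hvs
  refine Finset.eq_of_subset_of_card_le hsub ?_
  rw [Qcard hsimp, hs.card_eq, hicard]

lemma DN1 {i : ℕ} (hicard : i = (nbrF G v).card + 1) :
    domNum (G.comap (Subtype.val : Vm v → V)) i + 1 ≤ domNum G i := by
  obtain ⟨D, hD, hDcard⟩ := exists_min_dom G i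
  set Q := insert v (nbrF G v) with hQ
  have hQmem : Q ∈ D := by
    obtain ⟨s, hsD, hsQ⟩ := hD.2 Q (Qmax hsimp) (by rw [Qcard hsimp]; omega)
    have : s = Q := Finset.eq_of_subset_of_card_le hsQ
      (by rw [Qcard hsimp, (hD.1 s hsD).card_eq, hicard])
    exact this ▸ hsD
  have hvD : ∀ s ∈ D.erase Q, v ∉ s := by
    intro s hs hvs
    have := mem_D_eq_Q hsimp (hD.1 s (Finset.mem_of_mem_erase hs)) hvs hicard
    exact (Finset.ne_of_mem_erase hs) this
  set D' := (D.erase Q).image (fun s => liftF (v := v) s) with hD'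
  have hD'card : D'.card = D.card - 1 := by
    rw [hD', Finset.card_image_of_injOn, Finset.card_erase_of_mem hQmem]
    intro s hs t ht h
    exact liftF_inj (hvD s hs) (hvD t ht) h
  have hdom' : IsDominatingCliqueSet (G.comap (Subtype.val : Vm v → V)) i D' := by
    constructor
    · intro s' hs'
      rw [hD', Finset.mem_image] at hs'
      obtain ⟨s, hs, rfl⟩ := hs'
      rw [nclique_map_iff, map_liftF (hvD s hs)]
      exact hD.1 s (Finset.mem_of_mem_erase hs)
    · intro t' ht' hit'
      rcases maxclique_dichotomy hsimp ht' with hmax | hnbr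
      · obtain ⟨s, hsD, hst⟩ := hD.2 _ hmax (by rwa [Finset.card_map])
        have hvT : v ∉ t'.map (emb (v := v)) := v_not_mem_map
        have hvs : v ∉ s := fun h => hvT (hst h)
        have hsQ : s ≠ Q := by
          intro h
          exact hvs (h ▸ Finset.mem_insert_self v _)
        refine ⟨liftF s, ?_, ?_⟩
        · rw [hD', Finset.mem_image]
          exact ⟨s, Finset.mem_erase.mpr ⟨hsQ, hsD⟩, rfl⟩
        · have := liftF_mono (v := v) hst
          rwa [liftF_map] at this
      · exfalso
        have h1 : t'.card = (nbrF G v).card := by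
          rw [← Finset.card_map (emb (v := v)), hnbr]
        omega
  have h1 : domNum (G.comap (Subtype.val : Vm v → V)) i ≤ D'.card := domNum_le hdom'
  have h2 : 1 ≤ D.card := Finset.card_pos.mpr ⟨Q, hQmem⟩
  omega

lemma DN2 {i : ℕ} (hi : 1 ≤ i) (hicard : i ≠ (nbrF G v).card + 1) :
    domNum (G.comap (Subtype.val : Vm v → V)) i ≤ domNum G i := by
  obtain ⟨D, hD, hDcard⟩ := exists_min_dom G i
  set Q := insert v (nbrF G v) with hQ
  set m := (nbrF G v).card with hm
  -- replacement function
  set rep : Finset V → Finset V := fun s =>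
    if h : v ∈ s ∧ ∃ T, s.erase v ⊆ T ∧ T ⊆ nbrF G v ∧ T.card = i then h.2.choose else s
    with hrep
  have hrep_not : ∀ s, v ∉ s → rep s = s := by
    intro s hv
    rw [hrep]
    exact dif_neg (fun h => hv h.1)
  have hrep_mem : ∀ s ∈ D, v ∈ s → rep s ⊆ nbrF G v ∧ G.IsNClique i (rep s) := by
    intro s hsD hvs
    have hclique := hD.1 s hsD
    have hsQ : s ⊆ Q := subset_Q hsimp hclique.1 hvs
    have hile : i ≤ m + 1 := by
      rw [← hclique.card_eq]
      calc s.card ≤ Q.card := Finset.card_le_card hsQ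
        _ = m + 1 := Qcard hsimp
    have him : i ≤ m := by omega
    have herase : s.erase v ⊆ nbrF G v := by
      intro x hx
      rw [Finset.mem_erase] at hx
      have := hsQ hx.2
      rcases Finset.mem_insert.mp this with h | h
      · exact absurd h hx.1
      · exact h
    have hcard' : (s.erase v).card = i - 1 := by
      rw [Finset.card_erase_of_mem hvs, hclique.card_eq]
    have hex : ∃ T, s.erase v ⊆ T ∧ T ⊆ nbrF G v ∧ T.card = i := by
      obtain ⟨C, hC1, hC2, hC3⟩ := Finset.exists_subsuperset_card_eq herase (n := i)
        (by rw [hcard']; omega) (by omega)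
      exact ⟨C, hC1, hC2, hC3⟩
    have hcond : v ∈ s ∧ ∃ T, s.erase v ⊆ T ∧ T ⊆ nbrF G v ∧ T.card = i := ⟨hvs, hex⟩
    have : rep s = hcond.2.choose := by rw [hrep]; exact dif_pos hcond
    rw [this]
    obtain ⟨h1, h2, h3⟩ := hcond.2.choose_spec
    exact ⟨h2, ⟨(nbrF_clique hsimp).subset (by exact_mod_cast h2), h3⟩⟩
  set D' := D.image (fun s => liftF (v := v) (rep s)) with hD'
  have hD'card : D'.card ≤ D.card := Finset.card_image_le
  have hrep_good : ∀ s ∈ D, G.IsNClique i (rep s) ∧ v ∉ rep s := by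
    intro s hsD
    by_cases hvs : v ∈ s
    · obtain ⟨h1, h2⟩ := hrep_mem s hsD hvs
      exact ⟨h2, fun h => v_not_mem_nbrF (h1 h)⟩
    · rw [hrep_not s hvs]
      exact ⟨hD.1 s hsD, hvs⟩
  have hdom' : IsDominatingCliqueSet (G.comap (Subtype.val : Vm v → V)) i D' := by
    constructor
    · intro s' hs'
      rw [hD', Finset.mem_image] at hs'
      obtain ⟨s, hs, rfl⟩ := hs'
      obtain ⟨h1, h2⟩ := hrep_good s hs
      rw [nclique_map_iff, map_liftF h2]
      exact h1
    · intro t' ht' hit'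
      rcases maxclique_dichotomy hsimp ht' with hmax | hnbr
      · obtain ⟨s, hsD, hst⟩ := hD.2 _ hmax (by rwa [Finset.card_map])
        have hvT : v ∉ t'.map (emb (v := v)) := v_not_mem_map
        have hvs : v ∉ s := fun h => hvT (hst h)
        refine ⟨liftF (rep s), ?_, ?_⟩
        · rw [hD', Finset.mem_image]
          exact ⟨s, hsD, rfl⟩
        · rw [hrep_not s hvs]
          have := liftF_mono (v := v) hst
          rwa [liftF_map] at this
      · -- t' corresponds to the neighbourhood of v
        obtain ⟨s, hsD, hsQ⟩ := hD.2 Q (Qmax hsimp) (by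
          rw [Qcard hsimp]
          have : t'.card = m := by rw [← Finset.card_map (emb (v := v)), hnbr]
          omega)
        have hsub : rep s ⊆ nbrF G v := by
          by_cases hvs : v ∈ s
          · exact (hrep_mem s hsD hvs).1
          · rw [hrep_not s hvs]
            intro x hx
            rcases Finset.mem_insert.mp (hsQ hx) with h | h
            · exact absurd (h ▸ hx) hvs
            · exact h
        refine ⟨liftF (rep s), ?_, ?_⟩
        · rw [hD', Finset.mem_image]
          exact ⟨s, hsD, rfl⟩
        · have h2 := liftF_mono (v := v) hsub
          have h3 : liftF (v := v) (nbrF G v) = t' := by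
            rw [← hnbr, liftF_map]
          rw [← h3]
          exact h2
  calc domNum (G.comap (Subtype.val : Vm v → V)) i ≤ D'.card := domNum_le hdom'
    _ ≤ D.card := hD'card
    _ = domNum G i := hDcard

end DomNumRel

section Poly

open Polynomial

noncomputable def fpolyN (G : SimpleGraph V) (N : ℕ) : Polynomial ℤ :=
  ∑ j ∈ Finset.range N, Polynomial.C ((cliqueCount G (j + 1) : ℤ)) * Polynomial.X ^ j

lemma fpolyN_eq (G : SimpleGraph V) {N N' : ℕ} (h1 : Fintype.card V ≤ N) (h2 : N ≤ N') :
    fpolyN G N' = fpolyN G N := by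
  rw [fpolyN, fpolyN]
  refine (Finset.sum_subset (Finset.range_subset_range.mpr h2) ?_).symm
  intro j hj hj'
  rw [Finset.mem_range] at hj hj'
  have : Fintype.card V < j + 1 := by omega
  rw [cliqueCount_eq_zero G this]
  simp

noncomputable def bcoef (G : SimpleGraph V) (i : ℕ) : ℤ :=
  ((fpolyN G (Fintype.card V)).comp (Polynomial.X - 1)).coeff (i - 1)

lemma card_Vm (v : V) : Fintype.card (Vm v) + 1 = Fintype.card V := by
  rw [Fintype.card_subtype]
  rw [show (Finset.univ.filter (fun u : V => u ≠ v)) = Finset.univ.erase v by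
    ext x; simp [Finset.mem_erase, and_comm]]
  rw [Finset.card_erase_of_mem (Finset.mem_univ v)]
  have : 1 ≤ Fintype.card V := Fintype.card_pos_iff.mpr ⟨v⟩
  rw [Finset.card_univ]
  omega

variable {v : V} (hsimp : ∀ y z : V, G.Adj v y → G.Adj v z → y ≠ z → G.Adj y z)
include hsimp

lemma fpolyN_rel {N : ℕ} (hN : Fintype.card V ≤ N) :
    fpolyN G N = fpolyN (G.comap (Subtype.val : Vm v → V)) N
      + (Polynomial.X + 1) ^ (nbrF G v).card := by
  set m := (nbrF G v).card with hm
  have hmN : m + 1 ≤ N := by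
    have h1 : (nbrF G v) ⊂ Finset.univ := ⟨Finset.subset_univ _,
      fun h => v_not_mem_nbrF (h (Finset.mem_univ v))⟩
    have := Finset.card_lt_card h1
    rw [Finset.card_univ] at this
    omega
  have hbin : (Polynomial.X + 1 : Polynomial ℤ) ^ m
      = ∑ j ∈ Finset.range N, Polynomial.C ((m.choose j : ℤ)) * Polynomial.X ^ j := by
    rw [add_pow]
    rw [← Finset.sum_subset (Finset.range_subset_range.mpr hmN)]
    · refine Finset.sum_congr rfl ?_
      intro k _
      have : Polynomial.C ((m.choose k : ℤ)) = ((m.choose k : ℕ) : Polynomial ℤ) := by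
        push_cast
        simp
      rw [this]
      ring
    · intro j hj hj'
      rw [Finset.mem_range] at hj hj'
      rw [Nat.choose_eq_zero_of_lt (by omega)]
      simp
  rw [hbin, fpolyN, fpolyN, ← Finset.sum_add_distrib]
  refine Finset.sum_congr rfl ?_
  intro j _
  rw [cliqueCount_rel hsimp (j + 1) (by omega)]
  simp only [Nat.add_sub_cancel]
  push_cast
  rw [Polynomial.C_add]
  ring

lemma bcoef_rel {i : ℕ} (hi : 1 ≤ i) :
    bcoef G i = bcoef (G.comap (Subtype.val : Vm v → V)) i
      + (if i = (nbrF G v).card + 1 then 1 else 0) := by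
  classical
  set m := (nbrF G v).card with hm
  set N := Fintype.card V with hN
  have hcard := card_Vm v
  have h1 : fpolyN (G.comap (Subtype.val : Vm v → V)) N
      = fpolyN (G.comap (Subtype.val : Vm v → V)) (Fintype.card (Vm v)) :=
    fpolyN_eq _ le_rfl (by omega)
  have h2 := fpolyN_rel hsimp (N := N) le_rfl
  rw [bcoef, h2, Polynomial.add_comp, Polynomial.coeff_add, h1]
  have h3 : ((Polynomial.X + 1 : Polynomial ℤ) ^ m).comp (Polynomial.X - 1)
      = Polynomial.X ^ m := by
    rw [Polynomial.pow_comp, Polynomial.add_comp, Polynomial.X_comp, Polynomial.one_comp]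
    ring_nf
  rw [h3, Polynomial.coeff_X_pow, bcoef]
  congr 1
  by_cases hc : i = m + 1
  · rw [if_pos hc, if_pos (by omega)]
  · rw [if_neg hc, if_neg (by omega)]

end Poly

lemma chordal_comap {W : Type} (f : W → V) (hf : Function.Injective f)
    (hch : IsChordal G) : IsChordal (G.comap f) := by
  intro n hn g hg hadj
  obtain ⟨i, j, h1, h2, h3, h⟩ := hch n hn (f ∘ g) (hf.comp hg) (fun i => hadj i)
  exact ⟨i, j, h1, h2, h3, h⟩

theorem key : ∀ (N : ℕ) (V : Type) [Fintype V] [DecidableEq V] (G : SimpleGraph V),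
    Fintype.card V ≤ N → IsChordal G → ∀ i : ℕ, 1 ≤ i →
    bcoef G i ≤ (domNum G i : ℤ) := by
  intro N
  induction N with
  | zero =>
    intro V _ _ G hN _ i _
    have hV : Fintype.card V = 0 := by omega
    have : bcoef G i = 0 := by
      rw [bcoef, hV, fpolyN]
      simp
    rw [this]
    exact Int.natCast_nonneg _
  | succ N ih =>
    intro V _ _ G hN hch i hi
    by_cases hV : Fintype.card V = 0
    · have : bcoef G i = 0 := by
        rw [bcoef, hV, fpolyN]
        simp
      rw [this]
      exact Int.natCast_nonneg _
    · haveI : Nonempty V := Fintype.card_pos_iff.mp (by omega)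
      obtain ⟨v, hsimp⟩ := ChordalAux.exists_simplicial hch
      have hch' : IsChordal (G.comap (Subtype.val : Vm v → V)) :=
        chordal_comap _ Subtype.val_injective hch
      have hcard := card_Vm v
      have hih := ih (Vm v) (G.comap (Subtype.val : Vm v → V)) (by omega) hch' i hi
      have hbc := bcoef_rel hsimp hi
      by_cases hcase : i = (nbrF G v).card + 1
      · have hdn := DN1 hsimp hcase
        rw [hbc, if_pos hcase]
        have : ((domNum (G.comap (Subtype.val : Vm v → V)) i + 1 : ℕ) : ℤ)
            ≤ (domNum G i : ℤ) := by exact_mod_cast hdn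
        push_cast at this
        linarith
      · have hdn := DN2 hsimp hi hcase
        rw [hbc, if_neg hcase]
        have : ((domNum (G.comap (Subtype.val : Vm v → V)) i : ℕ) : ℤ)
            ≤ (domNum G i : ℤ) := by exact_mod_cast hdn
        linarith


end ChordalAux2


/-- For a non-complete chordal graph `G` with largest clique size `d` and `b`-vector `b`,
one has `b i ≤ d_i(G)` for every `1 ≤ i ≤ d`. -/
theorem stmt2 {V : Type} [Fintype V] [DecidableEq V] (G : SimpleGraph V)
    (hnc : G ≠ ⊤) (hch : IsChordal G)
    (d : ℕ) (hd : ∃ s : Finset V, G.IsNClique d s)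
    (hdmax : ∀ (m : ℕ) (s : Finset V), G.IsNClique m s → m ≤ d)
    (b : ℕ → ℤ)
    (hb : ∀ x : ℤ, ∑ i ∈ Finset.Icc 1 d, b i * (x + 1) ^ (i - 1) =
      ∑ i ∈ Finset.Icc 1 d, (cliqueCount G i : ℤ) * x ^ (i - 1))
    (i : ℕ) (hi1 : 1 ≤ i) (hi2 : i ≤ d) :
    b i ≤ (domNum G i : ℤ) := by
  classical
  open Polynomial in
  have hdV : d ≤ Fintype.card V := by
    obtain ⟨s, hs⟩ := hd
    exact hs.card_eq ▸ Finset.card_le_univ s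
  have hccz : ∀ j : ℕ, d < j → cliqueCount G j = 0 := by
    intro j hj
    by_contra hne
    obtain ⟨s, hs⟩ := Set.nonempty_of_ncard_ne_zero hne
    exact absurd (hdmax j s hs) (by omega)
  set P : Polynomial ℤ := ∑ k ∈ Finset.Icc 1 d, Polynomial.C (b k) * (Polynomial.X + 1) ^ (k - 1)
    with hP
  set Qp : Polynomial ℤ := ∑ k ∈ Finset.Icc 1 d,
      Polynomial.C ((cliqueCount G k : ℤ)) * Polynomial.X ^ (k - 1) with hQp
  have hPQ : P = Qp := by
    apply Polynomial.funext
    intro x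
    rw [hP, hQp, Polynomial.eval_finset_sum, Polynomial.eval_finset_sum]
    simpa using hb x
  have hQf : Qp = ChordalAux2.fpolyN G (Fintype.card V) := by
    rw [hQp, ChordalAux2.fpolyN]
    rw [← Finset.sum_subset (Finset.range_subset_range.mpr hdV)
      (f := fun j => Polynomial.C ((cliqueCount G (j + 1) : ℤ)) * Polynomial.X ^ j)]
    · refine Finset.sum_nbij' (fun k => k - 1) (fun j => j + 1) ?_ ?_ ?_ ?_ ?_
      · intro k hk
        rw [Finset.mem_Icc] at hk
        rw [Finset.mem_range]
        omega
      · intro j hj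
        rw [Finset.mem_range] at hj
        rw [Finset.mem_Icc]
        omega
      · intro k hk
        rw [Finset.mem_Icc] at hk
        omega
      · intro j _
        omega
      · intro k hk
        rw [Finset.mem_Icc] at hk
        rw [show k - 1 + 1 = k by omega]
    · intro j hj hj'
      rw [Finset.mem_range] at hj hj'
      rw [hccz (j + 1) (by omega)]
      simp
  have hbc : b i = ChordalAux2.bcoef G i := by
    rw [ChordalAux2.bcoef, ← hQf, ← hPQ, hP]
    rw [Polynomial.comp, Polynomial.eval₂_finset_sum]
    have hterm : ∀ k, (Polynomial.eval₂ Polynomial.C (Polynomial.X - 1)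
        (Polynomial.C (b k) * (Polynomial.X + 1) ^ (k - 1)))
        = Polynomial.C (b k) * Polynomial.X ^ (k - 1) := by
      intro k
      rw [← Polynomial.comp, Polynomial.mul_comp, Polynomial.C_comp, Polynomial.pow_comp,
        Polynomial.add_comp, Polynomial.X_comp, Polynomial.one_comp]
      ring_nf
    rw [Finset.sum_congr rfl (fun k _ => hterm k)]
    rw [Polynomial.finset_sum_coeff]
    rw [Finset.sum_eq_single i]
    · rw [Polynomial.coeff_C_mul, Polynomial.coeff_X_pow, if_pos rfl, mul_one]
    · intro k hk hki
      rw [Finset.mem_Icc] at hk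
      rw [Polynomial.coeff_C_mul, Polynomial.coeff_X_pow, if_neg (by omega), mul_zero]
    · intro hi
      exact absurd (Finset.mem_Icc.mpr ⟨hi1, hi2⟩) hi
  rw [hbc]
  exact ChordalAux2.key (Fintype.card V) V G le_rfl hch i hi1
end

section
/- Let G be a finite simple graph that is not complete, let G be chordal, and let d be the largest cardinality of a clique in G. Then b_i = d_i(G) for every i with κ̃(G) < i ≤ d. -/
open Finset

section Aux
open Polynomial

lemma exists_max_clique_sup' {V : Type} [Fintype V] [DecidableEq V] (G : SimpleGraph V)
    (s : Finset V) (hs : G.IsClique (↑s : Set V)) : ∃ T, IsMaxCliqueOf G T ∧ s ⊆ T := by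
  classical
  set S : Finset (Finset V) := univ.filter (fun t => G.IsClique (↑t : Set V) ∧ s ⊆ t) with hS
  have hsS : s ∈ S := by simp [hS, hs]
  obtain ⟨T, hT, hmax⟩ := S.exists_max_image (fun t => t.card) ⟨s, hsS⟩
  simp only [hS, mem_filter, mem_univ, true_and] at hT
  refine ⟨T, ⟨hT.1, fun t ht hTt => ?_⟩, hT.2⟩
  have htS : t ∈ S := by simp [hS, ht, hT.2.trans hTt]
  exact Finset.eq_of_subset_of_card_le hTt (hmax t htS)

lemma inter_card_le_kappa' {V : Type} [Fintype V] [DecidableEq V] {G : SimpleGraph V}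
    {C C' : Finset V} (hC : IsMaxCliqueOf G C) (hC' : IsMaxCliqueOf G C') (hne : C ≠ C') :
    (C ∩ C').card ≤ kappaTilde G := by
  apply le_csSup
  · refine ⟨Fintype.card V, fun k hk => ?_⟩
    obtain ⟨D, D', _, _, _, rfl⟩ := hk
    exact (Finset.card_le_univ _)
  · exact ⟨C, C', hC, hC', hne, rfl⟩

lemma unique_max_clique' {V : Type} [Fintype V] [DecidableEq V] {G : SimpleGraph V} {i : ℕ}
    (hi : kappaTilde G < i) {s T T' : Finset V} (hcard : i ≤ s.card)
    (hT : IsMaxCliqueOf G T) (hT' : IsMaxCliqueOf G T') (hsT : s ⊆ T) (hsT' : s ⊆ T') :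
    T = T' := by
  by_contra hne
  have h1 : s ⊆ T ∩ T' := Finset.subset_inter hsT hsT'
  have := (Finset.card_le_card h1).trans (inter_card_le_kappa' hT hT' hne)
  omega

noncomputable def bigCliques' {V : Type} [Fintype V] (G : SimpleGraph V) (i : ℕ) :
    Finset (Finset V) :=
  @Finset.filter _ (fun T => IsMaxCliqueOf G T ∧ i ≤ T.card) (Classical.decPred _) univ

lemma mem_bigCliques' {V : Type} [Fintype V] {G : SimpleGraph V} {i : ℕ} {T : Finset V} :
    T ∈ bigCliques' G i ↔ IsMaxCliqueOf G T ∧ i ≤ T.card := by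
  simp [bigCliques']

lemma domNum_eq' {V : Type} [Fintype V] [DecidableEq V] (G : SimpleGraph V) (i : ℕ)
    (hi : kappaTilde G < i) :
    domNum G i = (bigCliques' G i).card := by
  classical
  set M := bigCliques' G i with hM
  have hsub : ∀ T ∈ M, ∃ s, s ⊆ T ∧ s.card = i := fun T hT =>
    Finset.exists_subset_card_eq (mem_bigCliques'.mp hT).2
  choose f hf1 hf2 using hsub
  set g : Finset V → Finset V := fun T => if h : T ∈ M then f T h else ∅ with hg
  set D : Finset (Finset V) := M.image g with hD
  have hdom : IsDominatingCliqueSet G i D := by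
    constructor
    · intro s hs
      simp only [hD, mem_image] at hs
      obtain ⟨T, hT, rfl⟩ := hs
      obtain ⟨hT1, hT2⟩ := mem_bigCliques'.mp hT
      simp only [hg, dif_pos hT]
      exact ⟨hT1.1.subset (by exact_mod_cast hf1 T hT), hf2 T hT⟩
    · intro t ht hti
      have htM : t ∈ M := mem_bigCliques'.mpr ⟨ht, hti⟩
      refine ⟨g t, Finset.mem_image_of_mem g htM, ?_⟩
      simp only [hg, dif_pos htM]
      exact hf1 t htM
  have hub : domNum G i ≤ M.card :=
    le_trans (Nat.sInf_le ⟨D, hdom, rfl⟩) (Finset.card_image_le)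
  have hne : {k | ∃ D : Finset (Finset V), IsDominatingCliqueSet G i D ∧ D.card = k}.Nonempty :=
    ⟨D.card, D, hdom, rfl⟩
  obtain ⟨D', hD', hcard⟩ := Nat.sInf_mem hne
  have hlb : M.card ≤ D'.card := by
    have hch : ∀ T ∈ M, ∃ s ∈ D', s ⊆ T := fun T hT =>
      hD'.2 T (mem_bigCliques'.mp hT).1 (mem_bigCliques'.mp hT).2
    choose ch hch1 hch2 using hch
    apply Finset.card_le_card_of_injOn (fun T => if h : T ∈ M then ch T h else ∅)
    · intro T hT
      simp only [dif_pos hT]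
      exact (by simp only [Finset.mem_coe] at hT ⊢; rw [dif_pos hT]; exact hch1 T hT)
    · intro T hT T' hT' heq
      simp only [Finset.mem_coe] at hT hT'
      simp only [dif_pos hT, dif_pos hT'] at heq
      have h1 : ch T hT ⊆ T := hch2 T hT
      have h2 : ch T hT ⊆ T' := heq ▸ hch2 T' hT'
      have hcard1 : (ch T hT).card = i := (hD'.1 _ (hch1 T hT)).2
      exact unique_max_clique' hi (le_of_eq hcard1.symm) (mem_bigCliques'.mp hT).1
        (mem_bigCliques'.mp hT').1 h1 h2
  unfold domNum at hub ⊢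
  omega

lemma cliqueCount_eq' {V : Type} [Fintype V] [DecidableEq V] (G : SimpleGraph V) {i j : ℕ}
    (hi : kappaTilde G < i) (hij : i ≤ j) :
    cliqueCount G j = ∑ T ∈ bigCliques' G i, (T.card).choose j := by
  classical
  have hset : {s : Finset V | G.IsNClique j s} =
      ↑(univ.filter (fun s : Finset V => G.IsNClique j s)) := by
    ext s; simp
  rw [cliqueCount, hset, Set.ncard_coe_finset]
  have hbu : univ.filter (fun s : Finset V => G.IsNClique j s) =
      (bigCliques' G i).biUnion (fun T => T.powersetCard j) := by
    ext s
    simp only [mem_filter, mem_univ, true_and, mem_biUnion, Finset.mem_powersetCard]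
    constructor
    · rintro ⟨hcl, hcard⟩
      obtain ⟨T, hT, hsT⟩ := exists_max_clique_sup' G s hcl
      refine ⟨T, mem_bigCliques'.mpr ⟨hT, ?_⟩, hsT, hcard⟩
      calc i ≤ j := hij
        _ = s.card := hcard.symm
        _ ≤ T.card := Finset.card_le_card hsT
    · rintro ⟨T, hT, hsT, hcard⟩
      exact ⟨(mem_bigCliques'.mp hT).1.1.subset (by exact_mod_cast hsT), hcard⟩
  rw [hbu, Finset.card_biUnion]
  · exact Finset.sum_congr rfl fun T _ => Finset.card_powersetCard j T
  · intro T hT T' hT' hne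
    simp only [Finset.disjoint_left]
    intro s hs hs'
    rw [Finset.mem_powersetCard] at hs hs'
    exact hne (unique_max_clique' hi (hij.trans (le_of_eq hs.2.symm))
      (mem_bigCliques'.mp hT).1 (mem_bigCliques'.mp hT').1 hs.1 hs'.1)

lemma binom_poly_id' (t : ℕ) :
    ∑ j ∈ Finset.Icc 1 t, (C ((t.choose j : ℤ))) * (X - 1) ^ (j - 1) =
      ∑ k ∈ Finset.range t, (X : ℤ[X]) ^ k := by
  have hX : (X - 1 : ℤ[X]) ≠ 0 := by
    have : (X - 1 : ℤ[X]) = X - C 1 := by simp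
    rw [this]
    exact X_sub_C_ne_zero 1
  apply mul_left_cancel₀ hX
  have h1 : (X - 1 : ℤ[X]) * ∑ j ∈ Finset.Icc 1 t, (C ((t.choose j : ℤ))) * (X - 1) ^ (j - 1)
      = ∑ j ∈ Finset.Icc 1 t, (C ((t.choose j : ℤ))) * (X - 1) ^ j := by
    rw [Finset.mul_sum]
    refine Finset.sum_congr rfl fun j hj => ?_
    have hj1 : 1 ≤ j := (Finset.mem_Icc.mp hj).1
    have : (X - 1 : ℤ[X]) ^ j = (X - 1) * (X - 1) ^ (j - 1) := by
      conv_lhs => rw [show j = (j - 1) + 1 by omega]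
      rw [pow_succ]
      ring
    rw [this]; ring
  rw [h1]
  have h2 : ∑ j ∈ Finset.Icc 1 t, (C ((t.choose j : ℤ))) * (X - 1) ^ j
      = (X : ℤ[X]) ^ t - 1 := by
    have hap := add_pow (X - 1 : ℤ[X]) 1 t
    simp only [one_pow, mul_one, add_sub_cancel] at hap
    have hXt : (X : ℤ[X]) ^ t
        = ∑ k ∈ Finset.range (t + 1), (X - 1) ^ k * (t.choose k : ℤ[X]) := by
      simpa using hap
    rw [hXt]
    rw [Finset.range_eq_Ico, Finset.sum_eq_sum_Ico_succ_bot (by omega)]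
    simp only [pow_zero, Nat.choose_zero_right, Nat.cast_one, one_mul]
    rw [show Finset.Ico 1 (t+1) = Finset.Icc 1 t by rfl]
    rw [add_comm, add_sub_cancel_right]
    refine Finset.sum_congr rfl fun j hj => ?_
    rw [mul_comm]
    simp [Polynomial.C_eq_natCast]
  rw [h2, ← geom_sum_mul]
  ring

end Aux

open Polynomial

/-- For a non-complete chordal graph `G` with largest clique size `d` and `b`-vector `b`,
one has `b i = d_i(G)` for every `i` with `κ̃(G) < i ≤ d`. -/
theorem stmt3 {V : Type} [Fintype V] [DecidableEq V] (G : SimpleGraph V)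
    (hnc : G ≠ ⊤) (hch : IsChordal G)
    (d : ℕ) (hd : ∃ s : Finset V, G.IsNClique d s)
    (hdmax : ∀ (m : ℕ) (s : Finset V), G.IsNClique m s → m ≤ d)
    (b : ℕ → ℤ)
    (hb : ∀ x : ℤ, ∑ i ∈ Finset.Icc 1 d, b i * (x + 1) ^ (i - 1) =
      ∑ i ∈ Finset.Icc 1 d, (cliqueCount G i : ℤ) * x ^ (i - 1))
    (i : ℕ) (hi1 : kappaTilde G < i) (hi2 : i ≤ d) :
    b i = (domNum G i : ℤ) := by
  classical
  have hi0 : 1 ≤ i := by omega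
  set M := bigCliques' G i with hMdef
  have htd : ∀ T ∈ M, T.card ≤ d := fun T hT =>
    hdmax T.card T ⟨(mem_bigCliques'.mp hT).1.1, rfl⟩
  have hti : ∀ T ∈ M, i ≤ T.card := fun T hT => (mem_bigCliques'.mp hT).2
  set A : ℤ[X] := ∑ i' ∈ Finset.Icc 1 d, C (b i') * (X + 1) ^ (i' - 1) with hAdef
  set B : ℤ[X] := ∑ j ∈ Finset.Icc 1 d, C ((cliqueCount G j : ℤ)) * X ^ (j - 1) with hBdef
  have hAB : A = B := by
    apply Polynomial.funext
    intro x
    simpa [hAdef, hBdef, eval_finset_sum] using hb x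
  have hA : A.comp (X - 1) = ∑ i' ∈ Finset.Icc 1 d, C (b i') * X ^ (i' - 1) := by
    simp only [hAdef, Polynomial.comp, eval₂_finset_sum, eval₂_mul, eval₂_C, eval₂_pow,
      eval₂_add, eval₂_X, eval₂_one, sub_add_cancel]
  have hB : B.comp (X - 1)
      = ∑ j ∈ Finset.Icc 1 d, C ((cliqueCount G j : ℤ)) * (X - 1) ^ (j - 1) := by
    simp only [hBdef, Polynomial.comp, eval₂_finset_sum, eval₂_mul, eval₂_C, eval₂_pow, eval₂_X]
  have hbi : b i = (A.comp (X - 1)).coeff (i - 1) := by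
    rw [hA, finset_sum_coeff]
    rw [Finset.sum_eq_single i]
    · simp [coeff_C_mul, coeff_X_pow]
    · intro j hj hne
      rw [coeff_C_mul, coeff_X_pow, if_neg, mul_zero]
      have hj1 : 1 ≤ j := (Finset.mem_Icc.mp hj).1
      omega
    · intro h
      exact absurd (Finset.mem_Icc.mpr ⟨hi0, hi2⟩) h
  rw [hbi, hAB, hB, finset_sum_coeff]
  have hcoeffzero : ∀ j, 1 ≤ j → j < i → ((X - 1 : ℤ[X]) ^ (j - 1)).coeff (i - 1) = 0 := by
    intro j hj1 hji
    apply coeff_eq_zero_of_natDegree_lt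
    have h1 : ((X - 1 : ℤ[X]) ^ (j - 1)).natDegree ≤ (j - 1) * (X - 1 : ℤ[X]).natDegree :=
      natDegree_pow_le
    have h2 : (X - 1 : ℤ[X]).natDegree = 1 := by
      rw [show (X - 1 : ℤ[X]) = X - Polynomial.C 1 by simp]
      exact natDegree_X_sub_C 1
    rw [h2, mul_one] at h1
    omega
  have hstep : ∀ j ∈ Finset.Icc 1 d,
      (C ((cliqueCount G j : ℤ)) * (X - 1) ^ (j - 1)).coeff (i - 1) =
      ∑ T ∈ M, ((T.card.choose j : ℤ) * ((X - 1 : ℤ[X]) ^ (j - 1)).coeff (i - 1)) := by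
    intro j hj
    obtain ⟨hj1, hjd⟩ := Finset.mem_Icc.mp hj
    rw [coeff_C_mul]
    by_cases hji : j < i
    · rw [hcoeffzero j hj1 hji]
      simp
    · push_neg at hji
      rw [cliqueCount_eq' G hi1 hji, ← Finset.sum_mul]
      push_cast
      rfl
  rw [Finset.sum_congr rfl hstep, Finset.sum_comm]
  have hinner : ∀ T ∈ M,
      ∑ j ∈ Finset.Icc 1 d, ((T.card.choose j : ℤ) * ((X - 1 : ℤ[X]) ^ (j - 1)).coeff (i - 1))
        = 1 := by
    intro T hT
    have ht1 : i ≤ T.card := hti T hT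
    have ht2 : T.card ≤ d := htd T hT
    have hsub : Finset.Icc 1 T.card ⊆ Finset.Icc 1 d := by
      apply Finset.Icc_subset_Icc_right ht2
    rw [← Finset.sum_subset hsub (by
      intro j hjd hjt
      rw [Finset.mem_Icc] at hjd hjt
      have : T.card < j := by omega
      rw [Nat.choose_eq_zero_of_lt this]
      simp)]
    have heq : ∑ j ∈ Finset.Icc 1 T.card,
        ((T.card.choose j : ℤ) * ((X - 1 : ℤ[X]) ^ (j - 1)).coeff (i - 1))
        = (∑ j ∈ Finset.Icc 1 T.card,
            C ((T.card.choose j : ℤ)) * (X - 1) ^ (j - 1)).coeff (i - 1) := by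
      rw [finset_sum_coeff]
      exact Finset.sum_congr rfl fun j _ => by rw [coeff_C_mul]
    rw [heq, binom_poly_id', finset_sum_coeff]
    have hmem : i - 1 ∈ Finset.range T.card := Finset.mem_range.mpr (by omega)
    simp only [coeff_X_pow]
    rw [Finset.sum_ite_eq]
    simp [hmem]
  rw [Finset.sum_congr rfl hinner, Finset.sum_const, nsmul_eq_mul, mul_one, domNum_eq' G i hi1]
end
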